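/- arXiv:math/0502039 — 3 statements merged into one kernel-verified Lean document; each statement's English description precedes it below -/
import Mathlib

section
/- Let A be a trace class operator on a Hilbert space H such that I+A is invertible, let P be a (bounded idempotent) projection on H and Q = I - P. Then det[P(I+A)^{-1}P + Q] = det(I + QAQ) / det(I + A). -/
open Filter

noncomputable section

variable {H : Type*} [NormedAddCommGroup H] [InnerProductSpace ℂ H] [CompleteSpace H]

/-- `A` is a trace class operator: the sums `∑ |⟪e i, A (f i)⟫|` over finite orthonormal
families `e`, `f` are uniformly bounded. -/
def IsTraceClass (A : H →L[ℂ] H) : Prop :=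
  ∃ M : ℝ, ∀ (n : ℕ) (e f : Fin n → H), Orthonormal ℂ e → Orthonormal ℂ f →
    ∑ i, ‖(inner ℂ (e i) (A (f i)) : ℂ)‖ ≤ M

/-- The trace norm of `A`: the supremum of `∑ |⟪e i, A (f i)⟫|` over finite orthonormal
families `e`, `f`. -/
def traceNorm (A : H →L[ℂ] H) : ℝ :=
  sSup {s : ℝ | ∃ (n : ℕ) (e f : Fin n → H), Orthonormal ℂ e ∧ Orthonormal ℂ f ∧
    s = ∑ i, ‖(inner ℂ (e i) (A (f i)) : ℂ)‖}

namespace FredholmDetAux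

local notation "⟪" x ", " y "⟫" => (inner ℂ x y : ℂ)

lemma orthonormal_fin_zero : Orthonormal ℂ (fun i : Fin 0 => (0 : H)) :=
  ⟨fun i => i.elim0, fun i => i.elim0⟩

lemma zero_mem_traceNormSet (T : H →L[ℂ] H) :
    (0 : ℝ) ∈ {s : ℝ | ∃ (n : ℕ) (e f : Fin n → H), Orthonormal ℂ e ∧ Orthonormal ℂ f ∧
      s = ∑ i, ‖(inner ℂ (e i) (T (f i)) : ℂ)‖} :=
  ⟨0, (fun i : Fin 0 => 0), (fun i : Fin 0 => 0), orthonormal_fin_zero, orthonormal_fin_zero,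
    by simp⟩

lemma sum_le_traceNorm {T : H →L[ℂ] H} (hT : IsTraceClass T) {n : ℕ} {e f : Fin n → H}
    (he : Orthonormal ℂ e) (hf : Orthonormal ℂ f) :
    ∑ i, ‖⟪e i, T (f i)⟫‖ ≤ traceNorm T := by
  obtain ⟨M, hM⟩ := hT
  refine le_csSup ⟨M, ?_⟩ ⟨n, e, f, he, hf, rfl⟩
  rintro s ⟨n', e', f', he', hf', rfl⟩
  exact hM n' e' f' he' hf'

lemma traceNorm_le {T : H →L[ℂ] H} {M : ℝ}
    (hM : ∀ (n : ℕ) (e f : Fin n → H), Orthonormal ℂ e → Orthonormal ℂ f →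
      ∑ i, ‖⟪e i, T (f i)⟫‖ ≤ M) : traceNorm T ≤ M := by
  refine csSup_le ⟨0, zero_mem_traceNormSet T⟩ ?_
  rintro s ⟨n, e, f, he, hf, rfl⟩
  exact hM n e f he hf

lemma traceNorm_nonneg {T : H →L[ℂ] H} (hT : IsTraceClass T) : 0 ≤ traceNorm T := by
  obtain ⟨M, hM⟩ := hT
  refine le_csSup ⟨M, ?_⟩ (zero_mem_traceNormSet T)
  rintro s ⟨n', e', f', he', hf', rfl⟩
  exact hM n' e' f' he' hf'

lemma traceNorm_neg (T : H →L[ℂ] H) : traceNorm (-T) = traceNorm T := by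
  unfold traceNorm
  congr 1
  ext s
  constructor
  · rintro ⟨n, e, f, he, hf, rfl⟩
    exact ⟨n, e, f, he, hf, by simp⟩
  · rintro ⟨n, e, f, he, hf, rfl⟩
    exact ⟨n, e, f, he, hf, by simp⟩

lemma isTraceClass_zero : IsTraceClass (0 : H →L[ℂ] H) :=
  ⟨0, fun n e f _ _ => by simp⟩

lemma tc_neg {T : H →L[ℂ] H} (hT : IsTraceClass T) : IsTraceClass (-T) := by
  obtain ⟨M, hM⟩ := hT
  exact ⟨M, fun n e f he hf => by simpa using hM n e f he hf⟩

lemma tc_add {T S : H →L[ℂ] H} (hT : IsTraceClass T) (hS : IsTraceClass S) :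
    IsTraceClass (T + S) := by
  obtain ⟨M, hM⟩ := hT
  obtain ⟨M', hM'⟩ := hS
  refine ⟨M + M', fun n e f he hf => ?_⟩
  calc ∑ i, ‖⟪e i, (T + S) (f i)⟫‖ ≤ ∑ i, (‖⟪e i, T (f i)⟫‖ + ‖⟪e i, S (f i)⟫‖) := by
        refine Finset.sum_le_sum fun i _ => ?_
        simp only [ContinuousLinearMap.add_apply, inner_add_right]
        exact norm_add_le _ _
    _ = (∑ i, ‖⟪e i, T (f i)⟫‖) + ∑ i, ‖⟪e i, S (f i)⟫‖ := Finset.sum_add_distrib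
    _ ≤ M + M' := add_le_add (hM n e f he hf) (hM' n e f he hf)

lemma tc_sub {T S : H →L[ℂ] H} (hT : IsTraceClass T) (hS : IsTraceClass S) :
    IsTraceClass (T - S) := by
  simpa [sub_eq_add_neg] using tc_add hT (tc_neg hS)

lemma isTraceClass_rankOne (u v : H) : IsTraceClass ((innerSL ℂ v).smulRight u) := by
  refine ⟨‖v‖ * ‖u‖, fun n e f he hf => ?_⟩
  have h1 : ∀ i, ‖⟪e i, ((innerSL ℂ v).smulRight u) (f i)⟫‖ = ‖⟪v, f i⟫‖ * ‖⟪e i, u⟫‖ := by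
    intro i
    simp only [ContinuousLinearMap.smulRight_apply, innerSL_apply_apply, inner_smul_right]
    rw [norm_mul]
  calc ∑ i, ‖⟪e i, ((innerSL ℂ v).smulRight u) (f i)⟫‖
      = ∑ i, ‖⟪v, f i⟫‖ * ‖⟪e i, u⟫‖ := Finset.sum_congr rfl fun i _ => h1 i
    _ ≤ ‖v‖ * ‖u‖ := by
        have hcs := Finset.sum_mul_sq_le_sq_mul_sq Finset.univ
          (fun i => ‖⟪v, f i⟫‖) (fun i => ‖⟪e i, u⟫‖)
        have h2 : ∑ i, ‖⟪v, f i⟫‖ ^ 2 ≤ ‖v‖ ^ 2 := by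
          have : ∀ i, ‖⟪v, f i⟫‖ = ‖⟪f i, v⟫‖ := fun i => norm_inner_symm v (f i)
          simp_rw [this]
          exact Orthonormal.sum_inner_products_le v hf
        have h3 : ∑ i, ‖⟪e i, u⟫‖ ^ 2 ≤ ‖u‖ ^ 2 := Orthonormal.sum_inner_products_le u he
        have h4 : (∑ i, ‖⟪v, f i⟫‖ * ‖⟪e i, u⟫‖) ^ 2 ≤ (‖v‖ * ‖u‖) ^ 2 := by
          calc (∑ i, ‖⟪v, f i⟫‖ * ‖⟪e i, u⟫‖) ^ 2
              ≤ (∑ i, ‖⟪v, f i⟫‖ ^ 2) * ∑ i, ‖⟪e i, u⟫‖ ^ 2 := hcs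
            _ ≤ ‖v‖ ^ 2 * ‖u‖ ^ 2 := by
                apply mul_le_mul h2 h3 (Finset.sum_nonneg fun i _ => sq_nonneg _)
                  (sq_nonneg _)
            _ = (‖v‖ * ‖u‖) ^ 2 := by ring
        have h5 : 0 ≤ ‖v‖ * ‖u‖ := by positivity
        nlinarith [Finset.sum_nonneg (fun i (_ : i ∈ Finset.univ) =>
          mul_nonneg (norm_nonneg (⟪v, f i⟫)) (norm_nonneg (⟪e i, u⟫)))]

lemma isTraceClass_sum_rankOne {m : ℕ} (a b : Fin m → H) :
    IsTraceClass (∑ j, (innerSL ℂ (b j)).smulRight (a j)) := by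
  induction m with
  | zero => simpa using isTraceClass_zero
  | succ m ih =>
      rw [Fin.sum_univ_castSucc]
      exact tc_add (ih _ _) (isTraceClass_rankOne _ _)

lemma onb_norm_sum {n : ℕ} {e : Fin n → H} (he : Orthonormal ℂ e) (c : Fin n → ℂ) :
    ‖∑ i, c i • e i‖ ^ 2 = ∑ i, ‖c i‖ ^ 2 := by
  have := he.inner_sum c c Finset.univ
  have h2 : ‖∑ i, c i • e i‖ ^ 2 = RCLike.re ⟪∑ i, c i • e i, ∑ i, c i • e i⟫ :=
    norm_sq_eq_re_inner _
  rw [h2, this]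
  rw [map_sum]
  refine Finset.sum_congr rfl fun i _ => ?_
  rw [RCLike.conj_mul]
  norm_cast

lemma gram_dual {n : ℕ} {y : Fin n → H}
    (hy : ∀ c : Fin n → ℂ, ‖∑ i, c i • y i‖ ^ 2 ≤ ∑ i, ‖c i‖ ^ 2) (z : H) :
    ∑ i, ‖⟪z, y i⟫‖ ^ 2 ≤ ‖z‖ ^ 2 := by
  set d : Fin n → ℂ := fun i => ⟪z, y i⟫ with hd
  set t : ℝ := ∑ i, ‖d i‖ ^ 2 with ht
  set w : H := ∑ i, (starRingEnd ℂ) (d i) • y i with hw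
  have ht0 : 0 ≤ t := Finset.sum_nonneg fun i _ => sq_nonneg _
  have h1 : (t : ℂ) = ⟪z, w⟫ := by
    rw [hw, inner_sum]
    push_cast [ht]
    refine Finset.sum_congr rfl fun i _ => ?_
    rw [inner_smul_right]
    rw [show ⟪z, y i⟫ = d i from rfl]
    rw [RCLike.conj_mul]
    norm_cast
  have h2 : ‖w‖ ^ 2 ≤ t := by
    calc ‖w‖ ^ 2 ≤ ∑ i, ‖(starRingEnd ℂ) (d i)‖ ^ 2 := hy _
      _ = t := by simp [ht]
  have h3 : t ≤ ‖z‖ * ‖w‖ := by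
    calc t = ‖(t : ℂ)‖ := by rw [Complex.norm_real]; exact (abs_of_nonneg ht0).symm
      _ = ‖⟪z, w⟫‖ := by rw [h1]
      _ ≤ ‖z‖ * ‖w‖ := norm_inner_le_norm _ _
  nlinarith [norm_nonneg w, norm_nonneg z]


lemma exists_orthonormal_expansion {n : ℕ} (x : Fin n → H) :
    ∃ (m : ℕ) (u : Fin m → H), Orthonormal ℂ u ∧ ∀ i, x i = ∑ j, ⟪u j, x i⟫ • u j := by
  set U := Submodule.span ℂ (Set.range x) with hU
  haveI : FiniteDimensional ℂ U := FiniteDimensional.span_of_finite ℂ (Set.finite_range x)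
  set b := stdOrthonormalBasis ℂ U with hbdef
  refine ⟨_, fun j => (b j : H), ?_, ?_⟩
  · rw [orthonormal_iff_ite]
    intro i j
    rw [← Submodule.coe_inner]
    exact orthonormal_iff_ite.mp b.orthonormal i j
  · intro i
    have hx : x i ∈ U := Submodule.subset_span (Set.mem_range_self i)
    have h1 := b.sum_repr ⟨x i, hx⟩
    calc x i = ((∑ j, b.repr ⟨x i, hx⟩ j • b j : U) : H) := by rw [h1]
      _ = ∑ j, b.repr ⟨x i, hx⟩ j • (b j : H) := by push_cast; rfl
      _ = ∑ j, ⟪(b j : H), x i⟫ • (b j : H) := by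
          refine Finset.sum_congr rfl fun j _ => ?_
          congr 1
          rw [b.repr_apply_apply, Submodule.coe_inner]

lemma abs_sum_inner_le {T : H →L[ℂ] H} (hT : IsTraceClass T) {n : ℕ} (x y : Fin n → H)
    (hx : ∀ c : Fin n → ℂ, ‖∑ i, c i • x i‖ ^ 2 ≤ ∑ i, ‖c i‖ ^ 2)
    (hy : ∀ c : Fin n → ℂ, ‖∑ i, c i • y i‖ ^ 2 ≤ ∑ i, ‖c i‖ ^ 2) :
    ‖∑ i, ⟪x i, T (y i)⟫‖ ≤ traceNorm T := by
  classical
  obtain ⟨m₁, u, hu, hxu⟩ := exists_orthonormal_expansion x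
  obtain ⟨m₂, w, hw, hyw⟩ := exists_orthonormal_expansion y
  set a : Fin m₁ → Fin n → ℂ := fun j i => ⟪u j, x i⟫ with ha
  set b : Fin m₂ → Fin n → ℂ := fun k i => ⟪w k, y i⟫ with hb
  set S : Matrix (Fin m₁) (Fin m₂) ℂ :=
    Matrix.of (fun j k => ∑ i, (starRingEnd ℂ) (a j i) * b k i) with hS
  set t : Fin m₁ → Fin m₂ → ℂ := fun j k => ⟪u j, T (w k)⟫ with htt
  have hSapp : ∀ j k, S j k = ∑ i, (starRingEnd ℂ) (a j i) * b k i := fun j k => rfl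
  have hmv : ∀ (v : Fin m₂ → ℂ) j, S.mulVec v j = ∑ k, S j k * v k := fun v j => rfl
  -- Step R1
  have R1 : ∑ i, ⟪x i, T (y i)⟫ = ∑ j, ∑ k, S j k * t j k := by
    have hterm : ∀ i, ⟪x i, T (y i)⟫
        = ∑ j, ∑ k, (starRingEnd ℂ) (a j i) * b k i * t j k := by
      intro i
      conv_lhs => rw [hxu i, hyw i]
      rw [map_sum, sum_inner]
      refine Finset.sum_congr rfl fun j _ => ?_
      rw [inner_smul_left, inner_sum, Finset.mul_sum]
      refine Finset.sum_congr rfl fun k _ => ?_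
      rw [ContinuousLinearMap.map_smul, inner_smul_right]
      ring
    calc ∑ i, ⟪x i, T (y i)⟫
        = ∑ i, ∑ j, ∑ k, (starRingEnd ℂ) (a j i) * b k i * t j k :=
          Finset.sum_congr rfl fun i _ => hterm i
      _ = ∑ j, ∑ i, ∑ k, (starRingEnd ℂ) (a j i) * b k i * t j k := Finset.sum_comm
      _ = ∑ j, ∑ k, ∑ i, (starRingEnd ℂ) (a j i) * b k i * t j k :=
          Finset.sum_congr rfl fun j _ => Finset.sum_comm
      _ = ∑ j, ∑ k, S j k * t j k := by
          refine Finset.sum_congr rfl fun j _ => Finset.sum_congr rfl fun k _ => ?_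
          rw [hSapp, Finset.sum_mul]
  -- contraction property of S
  have hSv : ∀ v : Fin m₂ → ℂ, ∑ j, ‖S.mulVec v j‖ ^ 2 ≤ ∑ k, ‖v k‖ ^ 2 := by
    intro v
    set s : Fin n → ℂ := fun i => ∑ k, b k i * v k with hsd
    have hsz : ∀ i, s i = ⟪∑ k, (starRingEnd ℂ) (v k) • w k, y i⟫ := by
      intro i
      rw [sum_inner]
      refine Finset.sum_congr rfl fun k _ => ?_
      rw [inner_smul_left]
      simp [mul_comm, hb]
    have hs_bound : ∑ i, ‖s i‖ ^ 2 ≤ ∑ k, ‖v k‖ ^ 2 := by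
      calc ∑ i, ‖s i‖ ^ 2
          = ∑ i, ‖⟪∑ k, (starRingEnd ℂ) (v k) • w k, y i⟫‖ ^ 2 := by
            refine Finset.sum_congr rfl fun i _ => ?_; rw [hsz]
        _ ≤ ‖∑ k, (starRingEnd ℂ) (v k) • w k‖ ^ 2 := gram_dual hy _
        _ = ∑ k, ‖(starRingEnd ℂ) (v k)‖ ^ 2 := onb_norm_sum hw _
        _ = ∑ k, ‖v k‖ ^ 2 := by simp
    have hmvj : ∀ j, S.mulVec v j
        = (starRingEnd ℂ) ⟪u j, ∑ i, (starRingEnd ℂ) (s i) • x i⟫ := by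
      intro j
      rw [inner_sum]
      rw [map_sum]
      have lhs_eq : S.mulVec v j = ∑ i, (starRingEnd ℂ) (a j i) * s i := by
        rw [hmv]
        calc ∑ k, S j k * v k
            = ∑ k, ∑ i, (starRingEnd ℂ) (a j i) * b k i * v k := by
              refine Finset.sum_congr rfl fun k _ => ?_
              rw [hSapp, Finset.sum_mul]
          _ = ∑ i, ∑ k, (starRingEnd ℂ) (a j i) * b k i * v k := Finset.sum_comm
          _ = ∑ i, (starRingEnd ℂ) (a j i) * s i := by
              refine Finset.sum_congr rfl fun i _ => ?_
              rw [hsd]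
              simp only []
              rw [Finset.mul_sum]
              refine Finset.sum_congr rfl fun k _ => ?_
              ring
      rw [lhs_eq]
      refine Finset.sum_congr rfl fun i _ => ?_
      rw [inner_smul_right]
      simp only [map_mul, RingHomCompTriple.comp_apply, RingHom.id_apply,
        Complex.conj_conj]
      ring
    calc ∑ j, ‖S.mulVec v j‖ ^ 2
        = ∑ j, ‖⟪u j, ∑ i, (starRingEnd ℂ) (s i) • x i⟫‖ ^ 2 := by
          refine Finset.sum_congr rfl fun j _ => ?_
          rw [hmvj, RCLike.norm_conj]
      _ ≤ ‖∑ i, (starRingEnd ℂ) (s i) • x i‖ ^ 2 :=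
          Orthonormal.sum_inner_products_le _ hu
      _ ≤ ∑ i, ‖(starRingEnd ℂ) (s i)‖ ^ 2 := hx _
      _ = ∑ i, ‖s i‖ ^ 2 := by simp
      _ ≤ ∑ k, ‖v k‖ ^ 2 := hs_bound
  -- spectral decomposition of G = Sᴴ * S
  set G : Matrix (Fin m₂) (Fin m₂) ℂ := S.conjTranspose * S with hGdef
  have hG : G.IsHermitian := Matrix.isHermitian_conjTranspose_mul_self S
  set V : Fin m₂ → Fin m₂ → ℂ := fun l => (WithLp.equiv 2 _) (hG.eigenvectorBasis l) with hV
  set lam : Fin m₂ → ℝ := hG.eigenvalues with hlamdef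
  have heig : ∀ l k, G.mulVec (V l) k = (lam l : ℂ) * V l k := by
    intro l k
    have h1 := congr_fun (hG.mulVec_eigenvectorBasis l) k
    rw [hV]
    change G.mulVec (hG.eigenvectorBasis l).ofLp k = (lam l : ℂ) * (hG.eigenvectorBasis l).ofLp k
    rw [h1]
    simp [Complex.real_smul, hlamdef]
  have hVortho : ∀ l l', ∑ k, (starRingEnd ℂ) (V l k) * V l' k = if l = l' then 1 else 0 := by
    intro l l'
    have h1 : ⟪hG.eigenvectorBasis l, hG.eigenvectorBasis l'⟫
        = ∑ k, (starRingEnd ℂ) (V l k) * V l' k := by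
      rw [PiLp.inner_apply]
      exact Finset.sum_congr rfl fun k _ => RCLike.inner_apply' _ _
    rw [← h1]
    exact orthonormal_iff_ite.mp hG.eigenvectorBasis.orthonormal l l'
  have hVcomplete : ∀ k k', ∑ l, V l k * (starRingEnd ℂ) (V l k') = if k = k' then 1 else 0 := by
    intro k k'
    have h1 := hG.eigenvectorBasis.sum_inner_mul_inner
      (EuclideanSpace.single k 1) (EuclideanSpace.single k' 1)
    have h2 : ∀ (kk : Fin m₂) l, ⟪(EuclideanSpace.single kk 1 : EuclideanSpace ℂ (Fin m₂)),
        hG.eigenvectorBasis l⟫ = V l kk := by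
      intro kk l
      rw [EuclideanSpace.inner_single_left]
      simp only [map_one, one_mul]
      rfl
    have h3 : ∀ l, ⟪hG.eigenvectorBasis l,
        (EuclideanSpace.single k' 1 : EuclideanSpace ℂ (Fin m₂))⟫ = (starRingEnd ℂ) (V l k') := by
      intro l
      rw [← inner_conj_symm]
      rw [h2 k' l]
    have h4 : ⟪(EuclideanSpace.single k 1 : EuclideanSpace ℂ (Fin m₂)),
        (EuclideanSpace.single k' 1 : EuclideanSpace ℂ (Fin m₂))⟫ = if k = k' then 1 else 0 := by
      rw [EuclideanSpace.inner_single_left]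
      simp [EuclideanSpace.single_apply]
    rw [← h4, ← h1]
    refine Finset.sum_congr rfl fun l _ => ?_
    rw [h2 k l, h3]
  have hGapp : ∀ k k', G k k' = ∑ j, (starRingEnd ℂ) (S j k) * S j k' := by
    intro k k'
    rw [hGdef]
    rw [Matrix.mul_apply]
    refine Finset.sum_congr rfl fun j _ => ?_
    rw [Matrix.conjTranspose_apply]
    rfl
  have quad : ∀ p q : Fin m₂ → ℂ,
      ∑ j, (starRingEnd ℂ) (S.mulVec p j) * S.mulVec q j
        = ∑ k, (starRingEnd ℂ) (p k) * G.mulVec q k := by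
    intro p q
    calc ∑ j, (starRingEnd ℂ) (S.mulVec p j) * S.mulVec q j
        = ∑ j, ∑ k, ∑ k', (starRingEnd ℂ) (S j k) * (starRingEnd ℂ) (p k) * (S j k' * q k') := by
          refine Finset.sum_congr rfl fun j _ => ?_
          rw [hmv, hmv, map_sum, Finset.sum_mul_sum]
          refine Finset.sum_congr rfl fun k _ => Finset.sum_congr rfl fun k' _ => ?_
          rw [map_mul]
      _ = ∑ k, ∑ j, ∑ k', (starRingEnd ℂ) (S j k) * (starRingEnd ℂ) (p k) * (S j k' * q k') :=
          Finset.sum_comm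
      _ = ∑ k, (starRingEnd ℂ) (p k) * G.mulVec q k := by
          refine Finset.sum_congr rfl fun k _ => ?_
          rw [show G.mulVec q k = ∑ k', G k k' * q k' from rfl, Finset.mul_sum]
          rw [Finset.sum_comm]
          refine Finset.sum_congr rfl fun k' _ => ?_
          rw [hGapp, Finset.sum_mul, Finset.mul_sum]
          refine Finset.sum_congr rfl fun j _ => ?_
          ring
  have hSVnn : ∀ l l', ∑ j, (starRingEnd ℂ) (S.mulVec (V l) j) * S.mulVec (V l') j
      = (lam l' : ℂ) * (if l = l' then 1 else 0) := by
    intro l l'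
    rw [quad]
    calc ∑ k, (starRingEnd ℂ) (V l k) * G.mulVec (V l') k
        = ∑ k, (lam l' : ℂ) * ((starRingEnd ℂ) (V l k) * V l' k) := by
          refine Finset.sum_congr rfl fun k _ => ?_
          rw [heig]; ring
      _ = (lam l' : ℂ) * (if l = l' then 1 else 0) := by rw [← Finset.mul_sum, hVortho]
  have hlam_norm : ∀ l, ((∑ j, ‖S.mulVec (V l) j‖ ^ 2 : ℝ) : ℂ) = (lam l : ℂ) := by
    intro l
    have h1 := hSVnn l l
    simp only [eq_self_iff_true, if_true, mul_one] at h1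
    rw [← h1]
    push_cast
    refine Finset.sum_congr rfl fun j _ => ?_
    rw [RCLike.conj_mul]
    norm_cast
  have hlam_nonneg : ∀ l, 0 ≤ lam l := by
    intro l
    have h2 : (∑ j, ‖S.mulVec (V l) j‖ ^ 2 : ℝ) = lam l := by exact_mod_cast hlam_norm l
    rw [← h2]; positivity
  have hVnorm : ∀ l, ∑ k, ‖V l k‖ ^ 2 = 1 := by
    intro l
    have h1 := hVortho l l
    simp only [eq_self_iff_true, if_true] at h1
    have h3 : ((∑ k, ‖V l k‖ ^ 2 : ℝ) : ℂ) = 1 := by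
      rw [← h1]; push_cast
      refine Finset.sum_congr rfl fun k _ => ?_
      rw [RCLike.conj_mul]; norm_cast
    exact_mod_cast h3
  have hlam_le_one : ∀ l, lam l ≤ 1 := by
    intro l
    have h2 : (∑ j, ‖S.mulVec (V l) j‖ ^ 2 : ℝ) = lam l := by exact_mod_cast hlam_norm l
    rw [← h2, ← hVnorm l]
    exact hSv (V l)
  have R2 : ∀ j k, ∑ l, S.mulVec (V l) j * (starRingEnd ℂ) (V l k) = S j k := by
    intro j k
    calc ∑ l, S.mulVec (V l) j * (starRingEnd ℂ) (V l k)
        = ∑ l, ∑ k', S j k' * (V l k' * (starRingEnd ℂ) (V l k)) := by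
          refine Finset.sum_congr rfl fun l _ => ?_
          rw [hmv, Finset.sum_mul]
          exact Finset.sum_congr rfl fun k' _ => by ring
      _ = ∑ k', ∑ l, S j k' * (V l k' * (starRingEnd ℂ) (V l k)) := Finset.sum_comm
      _ = ∑ k', S j k' * (if k' = k then 1 else 0) := by
          refine Finset.sum_congr rfl fun k' _ => ?_
          rw [← Finset.mul_sum, hVcomplete]
      _ = S j k := by simp
  set E : Fin m₂ → H := fun l => ∑ j, (starRingEnd ℂ) (S.mulVec (V l) j) • u j with hE
  set F : Fin m₂ → H := fun l => ∑ k, (starRingEnd ℂ) (V l k) • w k with hF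
  have R3 : ∑ j, ∑ k, S j k * t j k = ∑ l, ⟪E l, T (F l)⟫ := by
    have hEF : ∀ l, ⟪E l, T (F l)⟫
        = ∑ j, S.mulVec (V l) j * ∑ k, (starRingEnd ℂ) (V l k) * t j k := by
      intro l
      rw [hE]
      simp only []
      rw [sum_inner]
      refine Finset.sum_congr rfl fun j _ => ?_
      rw [inner_smul_left, Complex.conj_conj]
      congr 1
      rw [hF]
      simp only []
      rw [map_sum, inner_sum]
      refine Finset.sum_congr rfl fun k _ => ?_
      rw [ContinuousLinearMap.map_smul, inner_smul_right]
    calc ∑ j, ∑ k, S j k * t j k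
        = ∑ j, ∑ k, ∑ l, S.mulVec (V l) j * (starRingEnd ℂ) (V l k) * t j k := by
          refine Finset.sum_congr rfl fun j _ => Finset.sum_congr rfl fun k _ => ?_
          rw [← R2, Finset.sum_mul]
      _ = ∑ j, ∑ l, ∑ k, S.mulVec (V l) j * (starRingEnd ℂ) (V l k) * t j k :=
          Finset.sum_congr rfl fun j _ => Finset.sum_comm
      _ = ∑ l, ∑ j, ∑ k, S.mulVec (V l) j * (starRingEnd ℂ) (V l k) * t j k :=
          Finset.sum_comm
      _ = ∑ l, ⟪E l, T (F l)⟫ := by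
          refine Finset.sum_congr rfl fun l _ => ?_
          rw [hEF]
          refine Finset.sum_congr rfl fun j _ => ?_
          rw [Finset.mul_sum]
          refine Finset.sum_congr rfl fun k _ => ?_
          ring
  have hEE : ∀ l l', ⟪E l, E l'⟫ = (lam l' : ℂ) * (if l = l' then 1 else 0) := by
    intro l l'
    rw [hE]
    simp only []
    rw [hu.inner_sum]
    calc ∑ j, (starRingEnd ℂ) ((starRingEnd ℂ) (S.mulVec (V l) j)) * (starRingEnd ℂ) (S.mulVec (V l') j)
        = (starRingEnd ℂ) (∑ j, (starRingEnd ℂ) (S.mulVec (V l) j) * S.mulVec (V l') j) := by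
          rw [map_sum]
          refine Finset.sum_congr rfl fun j _ => ?_
          rw [map_mul, Complex.conj_conj]
      _ = (lam l' : ℂ) * (if l = l' then 1 else 0) := by
          rw [hSVnn]
          rw [map_mul, Complex.conj_ofReal]
          congr 1
          split <;> simp
  have hFon : Orthonormal ℂ F := by
    rw [orthonormal_iff_ite]
    intro l l'
    rw [hF]
    simp only []
    rw [hw.inner_sum]
    calc ∑ k, (starRingEnd ℂ) ((starRingEnd ℂ) (V l k)) * (starRingEnd ℂ) (V l' k)
        = (starRingEnd ℂ) (∑ k, (starRingEnd ℂ) (V l k) * V l' k) := by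
          rw [map_sum]
          refine Finset.sum_congr rfl fun k _ => ?_
          rw [map_mul, Complex.conj_conj]
      _ = if l = l' then 1 else 0 := by
          rw [hVortho]
          split <;> simp
  -- final assembly of the key bound
  rw [R1, R3]
  refine le_trans (norm_sum_le _ _) ?_
  have hEzero : ∀ l, lam l = 0 → ‖⟪E l, T (F l)⟫‖ = 0 := by
    intro l hl
    have h1 : ‖E l‖ ^ 2 = 0 := by
      rw [norm_sq_eq_re_inner (𝕜 := ℂ), hEE l l]
      simp [hl]
    have h2 : E l = 0 := by
      have := pow_eq_zero_iff (by norm_num : (2:ℕ) ≠ 0) |>.mp h1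
      exact norm_eq_zero.mp this
    rw [h2]
    simp
  set s : Finset (Fin m₂) := Finset.univ.filter (fun l => lam l ≠ 0) with hsdef
  have hsum_filter : ∑ l, ‖⟪E l, T (F l)⟫‖ = ∑ l ∈ s, ‖⟪E l, T (F l)⟫‖ := by
    symm
    apply Finset.sum_filter_of_ne
    intro l _ hne
    by_contra h0
    exact hne (hEzero l h0)
  set g : Fin m₂ → H := fun l => (((Real.sqrt (lam l))⁻¹ : ℝ) : ℂ) • E l with hg
  have hterm : ∀ l ∈ s, ‖⟪E l, T (F l)⟫‖ ≤ ‖⟪g l, T (F l)⟫‖ := by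
    intro l hls
    have hl0 : lam l ≠ 0 := (Finset.mem_filter.mp hls).2
    have hlpos : 0 < lam l := lt_of_le_of_ne (hlam_nonneg l) (Ne.symm hl0)
    have hsq : 0 < Real.sqrt (lam l) := Real.sqrt_pos.mpr hlpos
    have hsq1 : Real.sqrt (lam l) ≤ 1 := by
      rw [show (1:ℝ) = Real.sqrt 1 by simp]
      exact Real.sqrt_le_sqrt (hlam_le_one l)
    have hcalc : ‖⟪g l, T (F l)⟫‖ = (Real.sqrt (lam l))⁻¹ * ‖⟪E l, T (F l)⟫‖ := by
      rw [hg]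
      simp only []
      rw [inner_smul_left, norm_mul, Complex.conj_ofReal]
      congr 1
      rw [Complex.norm_real]
      exact abs_of_nonneg (by positivity)
    have hnn : 0 ≤ ‖⟪E l, T (F l)⟫‖ := norm_nonneg _
    rw [hcalc]
    have h1i : 1 ≤ (Real.sqrt (lam l))⁻¹ := by
      have hmc := mul_inv_cancel₀ (ne_of_gt hsq)
      nlinarith [inv_nonneg.mpr (le_of_lt hsq)]
    exact le_mul_of_one_le_left hnn h1i
  have hgon : ∀ l ∈ s, ∀ l' ∈ s, ⟪g l, g l'⟫ = if l = l' then 1 else 0 := by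
    intro l hls l' hls'
    have hl0 : lam l ≠ 0 := (Finset.mem_filter.mp hls).2
    have hlpos : 0 < lam l := lt_of_le_of_ne (hlam_nonneg l) (Ne.symm hl0)
    rw [hg]
    simp only []
    rw [inner_smul_left, inner_smul_right, hEE, Complex.conj_ofReal]
    by_cases h : l = l'
    · subst h
      rw [if_pos rfl, mul_one]
      have hr : ((Real.sqrt (lam l))⁻¹ * ((Real.sqrt (lam l))⁻¹ * lam l) : ℝ) = 1 := by
        rw [← Real.mul_self_sqrt (le_of_lt hlpos)]
        field_simp
        rw [Real.sqrt_sq (Real.sqrt_nonneg _)]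
      calc (((Real.sqrt (lam l))⁻¹ : ℝ) : ℂ) * ((((Real.sqrt (lam l))⁻¹ : ℝ) : ℂ) * (lam l : ℂ))
          = (((Real.sqrt (lam l))⁻¹ * ((Real.sqrt (lam l))⁻¹ * lam l) : ℝ) : ℂ) := by push_cast; ring
        _ = 1 := by rw [hr]; simp
    · rw [if_neg h]
      simp
  set m₃ := s.card with hm₃
  set σ : Fin m₃ ≃ {x // x ∈ s} := s.equivFin.symm with hσ
  set e' : Fin m₃ → H := fun r => g ((σ r : {x // x ∈ s}) : Fin m₂) with he'def
  set f' : Fin m₃ → H := fun r => F ((σ r : {x // x ∈ s}) : Fin m₂) with hf'def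
  have hinj : Function.Injective (fun r : Fin m₃ => ((σ r : {x // x ∈ s}) : Fin m₂)) := by
    intro r r' hrr
    exact σ.injective (Subtype.coe_injective hrr)
  have he' : Orthonormal ℂ e' := by
    rw [orthonormal_iff_ite]
    intro r r'
    rw [he'def]
    simp only []
    rw [hgon _ (σ r).2 _ (σ r').2]
    by_cases h : r = r'
    · subst h; simp
    · rw [if_neg h, if_neg (fun hc => h (hinj hc))]
  have hf' : Orthonormal ℂ f' := hFon.comp _ hinj
  have hreindex : ∑ l ∈ s, ‖⟪g l, T (F l)⟫‖ = ∑ r : Fin m₃, ‖⟪e' r, T (f' r)⟫‖ := by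
    rw [← Finset.sum_coe_sort s (fun l => ‖⟪g l, T (F l)⟫‖)]
    rw [← Equiv.sum_comp σ (fun x : {x // x ∈ s} => ‖⟪g (x : Fin m₂), T (F (x : Fin m₂))⟫‖)]
  calc ∑ l, ‖⟪E l, T (F l)⟫‖
      = ∑ l ∈ s, ‖⟪E l, T (F l)⟫‖ := hsum_filter
    _ ≤ ∑ l ∈ s, ‖⟪g l, T (F l)⟫‖ := Finset.sum_le_sum hterm
    _ = ∑ r : Fin m₃, ‖⟪e' r, T (f' r)⟫‖ := hreindex
    _ ≤ traceNorm T := sum_le_traceNorm hT he' hf'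

lemma sum_abs_inner_le {T : H →L[ℂ] H} (hT : IsTraceClass T) {n : ℕ} (x y : Fin n → H)
    (hx : ∀ c : Fin n → ℂ, ‖∑ i, c i • x i‖ ^ 2 ≤ ∑ i, ‖c i‖ ^ 2)
    (hy : ∀ c : Fin n → ℂ, ‖∑ i, c i • y i‖ ^ 2 ≤ ∑ i, ‖c i‖ ^ 2) :
    ∑ i, ‖⟪x i, T (y i)⟫‖ ≤ traceNorm T := by
  classical
  set c : Fin n → ℂ := fun i => if ⟪x i, T (y i)⟫ = 0 then 1 else
    (‖⟪x i, T (y i)⟫‖ : ℂ) / ⟪x i, T (y i)⟫ with hc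
  have hcn : ∀ i, ‖c i‖ = 1 := by
    intro i
    rw [hc]
    simp only []
    split
    · simp
    · rename_i hne
      rw [norm_div, Complex.norm_real, norm_norm]
      exact div_self (norm_ne_zero_iff.mpr hne)
  set x' : Fin n → H := fun i => (starRingEnd ℂ) (c i) • x i with hx'
  have hkey : ∀ i, ⟪x' i, T (y i)⟫ = (‖⟪x i, T (y i)⟫‖ : ℂ) := by
    intro i
    rw [hx']
    simp only []
    rw [inner_smul_left, Complex.conj_conj, hc]
    simp only []
    split
    · rename_i h0; rw [h0]; simp
    · rename_i hne; rw [div_mul_cancel₀ _ hne]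
  have hx'gram : ∀ d : Fin n → ℂ, ‖∑ i, d i • x' i‖ ^ 2 ≤ ∑ i, ‖d i‖ ^ 2 := by
    intro d
    have h1 : ∑ i, d i • x' i = ∑ i, (d i * (starRingEnd ℂ) (c i)) • x i := by
      refine Finset.sum_congr rfl fun i _ => ?_
      rw [hx']
      simp [smul_smul]
    rw [h1]
    refine le_trans (hx _) (le_of_eq (Finset.sum_congr rfl fun i _ => ?_))
    rw [norm_mul, RCLike.norm_conj, hcn]
    ring
  have hmain := abs_sum_inner_le hT x' y hx'gram hy
  refine le_trans (le_of_eq ?_) hmain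
  have h2 : ∑ i, ⟪x' i, T (y i)⟫ = ((∑ i, ‖⟪x i, T (y i)⟫‖ : ℝ) : ℂ) := by
    push_cast
    exact Finset.sum_congr rfl fun i _ => hkey i
  rw [h2, Complex.norm_real]
  exact (abs_of_nonneg (Finset.sum_nonneg fun i _ => norm_nonneg _)).symm

lemma conj_sum_bound {T : H →L[ℂ] H} (hT : IsTraceClass T) (L R : H →L[ℂ] H)
    {n : ℕ} (e f : Fin n → H) (he : Orthonormal ℂ e) (hf : Orthonormal ℂ f) :
    ∑ i, ‖⟪e i, (L * T * R) (f i)⟫‖ ≤ (‖L‖ + 1) * ((‖R‖ + 1) * traceNorm T) := by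
  have hLpos : (0:ℝ) < ‖L‖ + 1 := by positivity
  have hRpos : (0:ℝ) < ‖R‖ + 1 := by positivity
  set x : Fin n → H := fun i =>
    (((‖L‖ + 1)⁻¹ : ℝ) : ℂ) • (ContinuousLinearMap.adjoint L) (e i) with hxdef
  set y : Fin n → H := fun i => (((‖R‖ + 1)⁻¹ : ℝ) : ℂ) • R (f i) with hydef
  have hadj : ‖ContinuousLinearMap.adjoint L‖ = ‖L‖ := ContinuousLinearMap.adjoint.norm_map L
  have hxg : ∀ cc : Fin n → ℂ, ‖∑ i, cc i • x i‖ ^ 2 ≤ ∑ i, ‖cc i‖ ^ 2 := by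
    intro cc
    have h1 : ∑ i, cc i • x i
        = (((‖L‖ + 1)⁻¹ : ℝ) : ℂ) • (ContinuousLinearMap.adjoint L) (∑ i, cc i • e i) := by
      rw [map_sum, Finset.smul_sum]
      refine Finset.sum_congr rfl fun i _ => ?_
      rw [ContinuousLinearMap.map_smul, hxdef]
      simp only []
      rw [smul_comm]
    rw [h1]
    have h3 : ‖(ContinuousLinearMap.adjoint L) (∑ i, cc i • e i)‖
        ≤ ‖L‖ * ‖∑ i, cc i • e i‖ := by
      refine le_trans ((ContinuousLinearMap.adjoint L).le_opNorm _) ?_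
      rw [hadj]
    have h4 : ‖(((‖L‖ + 1)⁻¹ : ℝ) : ℂ)‖ = (‖L‖ + 1)⁻¹ := by
      rw [Complex.norm_real]
      exact abs_of_nonneg (by positivity)
    have h5 : (0:ℝ) ≤ ‖∑ i, cc i • e i‖ := norm_nonneg _
    have h6 : (‖L‖ + 1)⁻¹ * ‖L‖ ≤ 1 := by
      rw [inv_mul_le_iff₀ hLpos]
      linarith [norm_nonneg L]
    have h2 : ‖(((‖L‖ + 1)⁻¹ : ℝ) : ℂ) • (ContinuousLinearMap.adjoint L) (∑ i, cc i • e i)‖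
        ≤ ‖∑ i, cc i • e i‖ := by
      rw [norm_smul, h4]
      calc (‖L‖ + 1)⁻¹ * ‖(ContinuousLinearMap.adjoint L) (∑ i, cc i • e i)‖
          ≤ (‖L‖ + 1)⁻¹ * (‖L‖ * ‖∑ i, cc i • e i‖) :=
            mul_le_mul_of_nonneg_left h3 (by positivity)
        _ = ((‖L‖ + 1)⁻¹ * ‖L‖) * ‖∑ i, cc i • e i‖ := by ring
        _ ≤ 1 * ‖∑ i, cc i • e i‖ := mul_le_mul_of_nonneg_right h6 h5
        _ = ‖∑ i, cc i • e i‖ := one_mul _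
    calc ‖(((‖L‖ + 1)⁻¹ : ℝ) : ℂ) • (ContinuousLinearMap.adjoint L) (∑ i, cc i • e i)‖ ^ 2
        ≤ ‖∑ i, cc i • e i‖ ^ 2 := pow_le_pow_left₀ (norm_nonneg _) h2 2
      _ = ∑ i, ‖cc i‖ ^ 2 := onb_norm_sum he cc
  have hyg : ∀ cc : Fin n → ℂ, ‖∑ i, cc i • y i‖ ^ 2 ≤ ∑ i, ‖cc i‖ ^ 2 := by
    intro cc
    have h1 : ∑ i, cc i • y i = (((‖R‖ + 1)⁻¹ : ℝ) : ℂ) • R (∑ i, cc i • f i) := by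
      rw [map_sum, Finset.smul_sum]
      refine Finset.sum_congr rfl fun i _ => ?_
      rw [ContinuousLinearMap.map_smul, hydef]
      simp only []
      rw [smul_comm]
    rw [h1]
    have h3 : ‖R (∑ i, cc i • f i)‖ ≤ ‖R‖ * ‖∑ i, cc i • f i‖ := R.le_opNorm _
    have h4 : ‖(((‖R‖ + 1)⁻¹ : ℝ) : ℂ)‖ = (‖R‖ + 1)⁻¹ := by
      rw [Complex.norm_real]
      exact abs_of_nonneg (by positivity)
    have h5 : (0:ℝ) ≤ ‖∑ i, cc i • f i‖ := norm_nonneg _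
    have h6 : (‖R‖ + 1)⁻¹ * ‖R‖ ≤ 1 := by
      rw [inv_mul_le_iff₀ hRpos]
      linarith [norm_nonneg R]
    have h2 : ‖(((‖R‖ + 1)⁻¹ : ℝ) : ℂ) • R (∑ i, cc i • f i)‖ ≤ ‖∑ i, cc i • f i‖ := by
      rw [norm_smul, h4]
      calc (‖R‖ + 1)⁻¹ * ‖R (∑ i, cc i • f i)‖
          ≤ (‖R‖ + 1)⁻¹ * (‖R‖ * ‖∑ i, cc i • f i‖) :=
            mul_le_mul_of_nonneg_left h3 (by positivity)
        _ = ((‖R‖ + 1)⁻¹ * ‖R‖) * ‖∑ i, cc i • f i‖ := by ring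
        _ ≤ 1 * ‖∑ i, cc i • f i‖ := mul_le_mul_of_nonneg_right h6 h5
        _ = ‖∑ i, cc i • f i‖ := one_mul _
    calc ‖(((‖R‖ + 1)⁻¹ : ℝ) : ℂ) • R (∑ i, cc i • f i)‖ ^ 2
        ≤ ‖∑ i, cc i • f i‖ ^ 2 := pow_le_pow_left₀ (norm_nonneg _) h2 2
      _ = ∑ i, ‖cc i‖ ^ 2 := onb_norm_sum hf cc
  have hterm : ∀ i, ‖⟪e i, (L * T * R) (f i)⟫‖
      = (‖L‖ + 1) * ((‖R‖ + 1) * ‖⟪x i, T (y i)⟫‖) := by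
    intro i
    have h1 : (L * T * R) (f i) = L (T (R (f i))) := rfl
    have h2 : ⟪(ContinuousLinearMap.adjoint L) (e i), T (R (f i))⟫
        = ⟪e i, L (T (R (f i)))⟫ :=
      ContinuousLinearMap.adjoint_inner_left L (T (R (f i))) (e i)
    have h3 : ⟪x i, T (y i)⟫
        = (((‖L‖ + 1)⁻¹ : ℝ) : ℂ) * ((((‖R‖ + 1)⁻¹ : ℝ) : ℂ)
          * ⟪(ContinuousLinearMap.adjoint L) (e i), T (R (f i))⟫) := by
      rw [hxdef, hydef]
      simp only []
      rw [inner_smul_left, ContinuousLinearMap.map_smul, inner_smul_right, Complex.conj_ofReal]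
    have h4 : ‖⟪x i, T (y i)⟫‖
        = (‖L‖ + 1)⁻¹ * ((‖R‖ + 1)⁻¹ * ‖⟪e i, L (T (R (f i)))⟫‖) := by
      rw [h3, h2]
      rw [norm_mul, norm_mul, Complex.norm_real, Complex.norm_real]
      rw [Real.norm_of_nonneg (by positivity : (0:ℝ) ≤ (‖L‖ + 1)⁻¹),
        Real.norm_of_nonneg (by positivity : (0:ℝ) ≤ (‖R‖ + 1)⁻¹)]
    rw [h1, h4]
    have hL0 : (‖L‖ + 1) ≠ 0 := ne_of_gt hLpos
    have hR0 : (‖R‖ + 1) ≠ 0 := ne_of_gt hRpos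
    field_simp
    try ring
  calc ∑ i, ‖⟪e i, (L * T * R) (f i)⟫‖
      = ∑ i, (‖L‖ + 1) * ((‖R‖ + 1) * ‖⟪x i, T (y i)⟫‖) :=
        Finset.sum_congr rfl fun i _ => hterm i
    _ = (‖L‖ + 1) * ((‖R‖ + 1) * ∑ i, ‖⟪x i, T (y i)⟫‖) := by
        rw [← Finset.mul_sum, ← Finset.mul_sum]
    _ ≤ (‖L‖ + 1) * ((‖R‖ + 1) * traceNorm T) := by
        have hs := sum_abs_inner_le hT x y hxg hyg
        exact mul_le_mul_of_nonneg_left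
          (mul_le_mul_of_nonneg_left hs (le_of_lt hRpos)) (le_of_lt hLpos)

lemma tc_conj {T : H →L[ℂ] H} (hT : IsTraceClass T) (L R : H →L[ℂ] H) :
    IsTraceClass (L * T * R) :=
  ⟨(‖L‖ + 1) * ((‖R‖ + 1) * traceNorm T),
    fun _ e f he hf => conj_sum_bound hT L R e f he hf⟩

lemma traceNorm_conj_le {T : H →L[ℂ] H} (hT : IsTraceClass T) (L R : H →L[ℂ] H) :
    traceNorm (L * T * R) ≤ (‖L‖ + 1) * ((‖R‖ + 1) * traceNorm T) :=
  traceNorm_le fun _ e f he hf => conj_sum_bound hT L R e f he hf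

lemma proj_perp {n : ℕ} {e : Fin n → H} (he : Orthonormal ℂ e) (π : H →L[ℂ] H)
    (hπ_apply : ∀ z, π z = ∑ i, ⟪e i, z⟫ • e i) (i : Fin n) (z : H) :
    ⟪e i, z - π z⟫ = 0 := by
  rw [inner_sub_right, hπ_apply, inner_sum]
  simp [inner_smul_right, orthonormal_iff_ite.mp he]

lemma proj_perp2 {n : ℕ} {e : Fin n → H} (he : Orthonormal ℂ e) (π : H →L[ℂ] H)
    (hπ_apply : ∀ z, π z = ∑ i, ⟪e i, z⟫ • e i) (z v : H) :
    ⟪π z, v - π v⟫ = 0 := by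
  rw [hπ_apply, sum_inner]
  refine Finset.sum_eq_zero fun i _ => ?_
  rw [inner_smul_left, proj_perp he π hπ_apply i v, mul_zero]

lemma proj_switch {n : ℕ} {e : Fin n → H} (he : Orthonormal ℂ e) (π : H →L[ℂ] H)
    (hπ_apply : ∀ z, π z = ∑ i, ⟪e i, z⟫ • e i) (z v : H) :
    ⟪z, v - π v⟫ = ⟪z - π z, v - π v⟫ := by
  rw [inner_sub_left, proj_perp2 he π hπ_apply z v, sub_zero]

lemma append_gram {n m' : ℕ} {e : Fin n → H} (he : Orthonormal ℂ e)
    (π : H →L[ℂ] H) (hπ_apply : ∀ z, π z = ∑ i, ⟪e i, z⟫ • e i)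
    {g : Fin m' → H} (hg : Orthonormal ℂ g) :
    ∀ c : Fin (n + m') → ℂ,
      ‖∑ i, c i • (Fin.append e (fun j => g j - π (g j))) i‖ ^ 2 ≤ ∑ i, ‖c i‖ ^ 2 := by
  intro c
  rw [Fin.sum_univ_add (fun i => c i • (Fin.append e (fun j => g j - π (g j))) i)]
  simp only [Fin.append_left, Fin.append_right]
  set z₁ : H := ∑ i : Fin n, c (Fin.castAdd m' i) • e i with hz₁
  set zg : H := ∑ j : Fin m', c (Fin.natAdd n j) • g j with hzg
  have hsecond : ∑ j : Fin m', c (Fin.natAdd n j) • (g j - π (g j)) = zg - π zg := by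
    rw [hzg, map_sum]
    rw [← Finset.sum_sub_distrib]
    refine Finset.sum_congr rfl fun j _ => ?_
    rw [ContinuousLinearMap.map_smul, smul_sub]
  rw [hsecond]
  have horth : ⟪z₁, zg - π zg⟫ = 0 := by
    rw [hz₁, sum_inner]
    refine Finset.sum_eq_zero fun i _ => ?_
    rw [inner_smul_left, proj_perp he π hπ_apply i zg, mul_zero]
  have hpyth : ‖z₁ + (zg - π zg)‖ ^ 2 = ‖z₁‖ ^ 2 + ‖zg - π zg‖ ^ 2 := by
    rw [norm_add_sq (𝕜 := ℂ), horth]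
    simp
  have hcontr : ‖zg - π zg‖ ^ 2 ≤ ‖zg‖ ^ 2 := by
    have hperp : ⟪π zg, zg - π zg⟫ = 0 := proj_perp2 he π hπ_apply zg zg
    have hzdecomp : zg = π zg + (zg - π zg) := by abel
    calc ‖zg - π zg‖ ^ 2 ≤ ‖π zg‖ ^ 2 + ‖zg - π zg‖ ^ 2 := le_add_of_nonneg_left (sq_nonneg _)
      _ = ‖π zg + (zg - π zg)‖ ^ 2 := by
          rw [norm_add_sq (𝕜 := ℂ), hperp]
          simp
      _ = ‖zg‖ ^ 2 := by rw [← hzdecomp]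
  calc ‖z₁ + (zg - π zg)‖ ^ 2 = ‖z₁‖ ^ 2 + ‖zg - π zg‖ ^ 2 := hpyth
    _ ≤ ‖z₁‖ ^ 2 + ‖zg‖ ^ 2 := by linarith
    _ = (∑ i : Fin n, ‖c (Fin.castAdd m' i)‖ ^ 2)
        + ∑ j : Fin m', ‖c (Fin.natAdd n j)‖ ^ 2 := by
        rw [hz₁, hzg, onb_norm_sum he, onb_norm_sum hg]
    _ = ∑ i, ‖c i‖ ^ 2 := (Fin.sum_univ_add (fun i => ‖c i‖ ^ 2)).symm

lemma exists_rankOne_approx {T : H →L[ℂ] H} (hT : IsTraceClass T) {ε : ℝ} (hε : 0 < ε) :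
    ∃ (m : ℕ) (aa bb : Fin m → H),
      traceNorm (T - ∑ j, (innerSL ℂ (bb j)).smulRight (aa j)) ≤ ε := by
  classical
  have h0 : traceNorm T - ε < traceNorm T := by linarith
  rw [traceNorm] at h0
  obtain ⟨s0, hmem, hs0⟩ := exists_lt_of_lt_csSup ⟨0, zero_mem_traceNormSet T⟩ h0
  obtain ⟨n, e, f, he, hf, rfl⟩ := hmem
  have hs0' : traceNorm T - ε < ∑ i, ‖⟪e i, T (f i)⟫‖ := hs0
  set π : H →L[ℂ] H := ∑ i, (innerSL ℂ (e i)).smulRight (e i) with hπdef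
  set ρ : H →L[ℂ] H := ∑ i, (innerSL ℂ (f i)).smulRight (f i) with hρdef
  have hπ_apply : ∀ z, π z = ∑ i, ⟪e i, z⟫ • e i := by
    intro z
    rw [hπdef, ContinuousLinearMap.sum_apply]
    refine Finset.sum_congr rfl fun i _ => ?_
    rw [ContinuousLinearMap.smulRight_apply, innerSL_apply_apply]
  have hρ_apply : ∀ z, ρ z = ∑ i, ⟪f i, z⟫ • f i := by
    intro z
    rw [hρdef, ContinuousLinearMap.sum_apply]
    refine Finset.sum_congr rfl fun i _ => ?_
    rw [ContinuousLinearMap.smulRight_apply, innerSL_apply_apply]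
  refine ⟨n + n,
    Fin.append e (fun i => T (f i) - π (T (f i))),
    Fin.append (fun i => (ContinuousLinearMap.adjoint T) (e i)) f, ?_⟩
  have hFsplit : ∑ j : Fin (n + n),
      (innerSL ℂ ((Fin.append (fun i => (ContinuousLinearMap.adjoint T) (e i)) f) j)).smulRight
        ((Fin.append e (fun i => T (f i) - π (T (f i)))) j)
      = π * T + (1 - π) * T * ρ := by
    rw [Fin.sum_univ_add]
    congr 1
    · ext z
      rw [ContinuousLinearMap.sum_apply]
      simp only [Fin.append_left]
      rw [show (π * T) z = π (T z) from rfl, hπ_apply]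
      refine Finset.sum_congr rfl fun i _ => ?_
      rw [ContinuousLinearMap.smulRight_apply, innerSL_apply_apply]
      rw [ContinuousLinearMap.adjoint_inner_left]
    · ext z
      rw [ContinuousLinearMap.sum_apply]
      simp only [Fin.append_right]
      rw [show ((1 - π) * T * ρ) z = T (ρ z) - π (T (ρ z)) from by
        simp [ContinuousLinearMap.mul_apply, ContinuousLinearMap.sub_apply]]
      rw [hρ_apply]
      rw [map_sum, map_sum]
      rw [← Finset.sum_sub_distrib]
      refine Finset.sum_congr rfl fun i _ => ?_
      rw [ContinuousLinearMap.smulRight_apply, innerSL_apply_apply]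
      rw [ContinuousLinearMap.map_smul, ContinuousLinearMap.map_smul, smul_sub]
  rw [hFsplit]
  have hTF : T - (π * T + (1 - π) * T * ρ) = (1 - π) * T * (1 - ρ) := by noncomm_ring
  rw [hTF]
  refine traceNorm_le ?_
  intro m' g h hg hh
  have hterm : ∀ j, ⟪g j, ((1 - π) * T * (1 - ρ)) (h j)⟫
      = ⟪g j - π (g j), T (h j - ρ (h j))⟫ := by
    intro j
    have h1 : ((1 - π) * T * (1 - ρ)) (h j) = T (h j - ρ (h j)) - π (T (h j - ρ (h j))) := by
      simp [ContinuousLinearMap.mul_apply, ContinuousLinearMap.sub_apply]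
    rw [h1]
    rw [proj_switch he π hπ_apply (g j) (T (h j - ρ (h j)))]
    rw [inner_sub_right]
    have h2 : ⟪g j - π (g j), π (T (h j - ρ (h j)))⟫ = 0 := by
      rw [← inner_conj_symm]
      rw [proj_perp2 he π hπ_apply (T (h j - ρ (h j))) (g j)]
      simp
    rw [h2, sub_zero]
  have hcomb := sum_abs_inner_le hT
    (Fin.append e (fun j => g j - π (g j)))
    (Fin.append f (fun j => h j - ρ (h j)))
    (append_gram he π hπ_apply hg)
    (append_gram hf ρ hρ_apply hh)
  rw [Fin.sum_univ_add (fun i => ‖⟪(Fin.append e (fun j => g j - π (g j))) i,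
    T ((Fin.append f (fun j => h j - ρ (h j))) i)⟫‖)] at hcomb
  simp only [Fin.append_left, Fin.append_right] at hcomb
  calc ∑ j, ‖⟪g j, ((1 - π) * T * (1 - ρ)) (h j)⟫‖
      = ∑ j, ‖⟪g j - π (g j), T (h j - ρ (h j))⟫‖ := by
        refine Finset.sum_congr rfl fun j _ => ?_
        rw [hterm]
    _ ≤ traceNorm T - ∑ i, ‖⟪e i, T (f i)⟫‖ := by linarith
    _ ≤ ε := by linarith

lemma det_prod_rankOne (det : (H →L[ℂ] H) → ℂ)
    (hdet_one : det 1 = 1)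
    (hdet_mul : ∀ A B : H →L[ℂ] H, IsTraceClass A → IsTraceClass B →
      det ((1 + A) * (1 + B)) = det (1 + A) * det (1 + B))
    (hdet_rankOne : ∀ u v : H, det (1 + (innerSL ℂ v).smulRight u) = 1 + (inner ℂ v u : ℂ))
    {m : ℕ} (a b : Fin m → H) (hperp : ∀ j j', ⟪b j, a j'⟫ = 0) :
    det (1 + ∑ j, (innerSL ℂ (b j)).smulRight (a j)) = 1 := by
  induction m with
  | zero => simpa using hdet_one
  | succ m ih =>
      rw [Fin.sum_univ_castSucc]
      have hzero : (∑ j : Fin m, (innerSL ℂ (b j.castSucc)).smulRight (a j.castSucc)) *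
          (innerSL ℂ (b (Fin.last m))).smulRight (a (Fin.last m)) = 0 := by
        rw [Finset.sum_mul]
        refine Finset.sum_eq_zero fun j _ => ?_
        ext z
        simp only [ContinuousLinearMap.mul_apply, ContinuousLinearMap.smulRight_apply,
          innerSL_apply_apply, ContinuousLinearMap.zero_apply, map_smul, inner_smul_right]
        rw [hperp]
        simp
      have hmul : (1 + ∑ j : Fin m, (innerSL ℂ (b j.castSucc)).smulRight (a j.castSucc)) *
          (1 + (innerSL ℂ (b (Fin.last m))).smulRight (a (Fin.last m)))
          = 1 + ((∑ j : Fin m, (innerSL ℂ (b j.castSucc)).smulRight (a j.castSucc))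
            + (innerSL ℂ (b (Fin.last m))).smulRight (a (Fin.last m))) := by
        calc (1 + ∑ j : Fin m, (innerSL ℂ (b j.castSucc)).smulRight (a j.castSucc)) *
            (1 + (innerSL ℂ (b (Fin.last m))).smulRight (a (Fin.last m)))
            = 1 + ((∑ j : Fin m, (innerSL ℂ (b j.castSucc)).smulRight (a j.castSucc))
              + (innerSL ℂ (b (Fin.last m))).smulRight (a (Fin.last m)))
              + (∑ j : Fin m, (innerSL ℂ (b j.castSucc)).smulRight (a j.castSucc)) *
                (innerSL ℂ (b (Fin.last m))).smulRight (a (Fin.last m)) := by noncomm_ring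
          _ = _ := by rw [hzero, add_zero]
      rw [← hmul]
      rw [hdet_mul _ _ (isTraceClass_sum_rankOne _ _) (isTraceClass_rankOne _ _)]
      rw [ih (fun j => a j.castSucc) (fun j => b j.castSucc) (fun j j' => hperp _ _)]
      rw [hdet_rankOne, hperp]
      simp

lemma det_unipotent (det : (H →L[ℂ] H) → ℂ)
    (hdet_one : det 1 = 1)
    (hdet_mul : ∀ A B : H →L[ℂ] H, IsTraceClass A → IsTraceClass B →
      det ((1 + A) * (1 + B)) = det (1 + A) * det (1 + B))
    (hdet_rankOne : ∀ u v : H, det (1 + (innerSL ℂ v).smulRight u) = 1 + (inner ℂ v u : ℂ))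
    (hdet_cont : ∀ (A : ℕ → H →L[ℂ] H) (B : H →L[ℂ] H), (∀ n, IsTraceClass (A n)) →
      IsTraceClass B → Tendsto (fun n => traceNorm (A n - B)) atTop (nhds 0) →
      Tendsto (fun n => det (1 + A n)) atTop (nhds (det (1 + B))))
    (N R S : H →L[ℂ] H) (hN : IsTraceClass N) (hNRS : N = R * N * S) (hSR : S * R = 0) :
    det (1 + N) = 1 := by
  classical
  have happrox : ∀ k : ℕ, ∃ (m : ℕ) (aa bb : Fin m → H),
      traceNorm (N - ∑ j, (innerSL ℂ (bb j)).smulRight (aa j)) ≤ 1 / (k + 1) := by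
    intro k
    exact exists_rankOne_approx hN (by positivity)
  choose m aa bb hab using happrox
  set Fk : ℕ → H →L[ℂ] H := fun k => ∑ j, (innerSL ℂ (bb k j)).smulRight (aa k j) with hFk
  set Gk : ℕ → H →L[ℂ] H := fun k => R * Fk k * S with hGk
  have hFk_tc : ∀ k, IsTraceClass (Fk k) := fun k => isTraceClass_sum_rankOne _ _
  have hGk_tc : ∀ k, IsTraceClass (Gk k) := fun k => tc_conj (hFk_tc k) R S
  have hdiff : ∀ k, Gk k - N = R * (Fk k - N) * S := by
    intro k
    rw [hGk]
    simp only []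
    conv_lhs => rw [hNRS]
    noncomm_ring
  have hdiff_tc : ∀ k, IsTraceClass (Gk k - N) := by
    intro k
    rw [hdiff]
    exact tc_conj (tc_sub (hFk_tc k) hN) R S
  have hbound : ∀ k : ℕ, traceNorm (Gk k - N) ≤ (‖R‖ + 1) * ((‖S‖ + 1) * (1 / (k + 1))) := by
    intro k
    rw [hdiff]
    refine le_trans (traceNorm_conj_le (tc_sub (hFk_tc k) hN) R S) ?_
    have h1 : traceNorm (Fk k - N) ≤ 1 / (k + 1) := by
      rw [show Fk k - N = -(N - Fk k) from (neg_sub _ _).symm, traceNorm_neg]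
      exact hab k
    have h2 : (0:ℝ) ≤ ‖S‖ + 1 := by positivity
    have h3 : (0:ℝ) ≤ ‖R‖ + 1 := by positivity
    exact mul_le_mul_of_nonneg_left (mul_le_mul_of_nonneg_left h1 h2) h3
  have htendaux : Tendsto (fun k : ℕ => (‖R‖ + 1) * ((‖S‖ + 1) * (1 / (k + 1 : ℝ))))
      atTop (nhds 0) := by
    have h0 : Tendsto (fun k : ℕ => (1 / (k + 1 : ℝ))) atTop (nhds 0) :=
      tendsto_one_div_add_atTop_nhds_zero_nat
    have h1 := h0.const_mul ((‖R‖ + 1) * (‖S‖ + 1))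
    rw [mul_zero] at h1
    refine h1.congr fun k => ?_
    ring
  have htend : Tendsto (fun k => traceNorm (Gk k - N)) atTop (nhds 0) :=
    squeeze_zero (fun k => traceNorm_nonneg (hdiff_tc k)) hbound htendaux
  have hdet_Gk : ∀ k, det (1 + Gk k) = 1 := by
    intro k
    have hGk_eq : Gk k = ∑ j, (innerSL ℂ
        ((ContinuousLinearMap.adjoint S) (bb k j))).smulRight (R (aa k j)) := by
      rw [hGk, hFk]
      simp only []
      rw [Finset.mul_sum, Finset.sum_mul]
      refine Finset.sum_congr rfl fun j _ => ?_
      ext z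
      simp only [ContinuousLinearMap.mul_apply, ContinuousLinearMap.smulRight_apply,
        innerSL_apply_apply, map_smul]
      rw [ContinuousLinearMap.adjoint_inner_left]
    rw [hGk_eq]
    refine det_prod_rankOne det hdet_one hdet_mul hdet_rankOne _ _ ?_
    intro j j'
    rw [ContinuousLinearMap.adjoint_inner_left]
    rw [show S (R (aa k j')) = (S * R) (aa k j') from rfl, hSR]
    simp
  have hlim := hdet_cont Gk N hGk_tc hN htend
  have hconst : Tendsto (fun k => det (1 + Gk k)) atTop (nhds 1) := by
    have hfn : (fun k => det (1 + Gk k)) = fun _ => 1 := funext hdet_Gk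
    rw [hfn]
    exact tendsto_const_nhds
  exact (tendsto_nhds_unique hlim hconst)

end FredholmDetAux

open FredholmDetAux

/-- Let `A` be trace class with `I + A` invertible, `P` a bounded projection and `Q = I − P`.
Then `det[P(I+A)⁻¹P + Q] = det(I + QAQ)/det(I + A)`, where `det` is the Fredholm determinant,
characterized by its normalization, multiplicativity, value on rank-one perturbations, and
continuity in the trace norm. -/
theorem det_projection_inverse_formula
    [TopologicalSpace.SeparableSpace H]
    (det : (H →L[ℂ] H) → ℂ)
    (hdet_one : det 1 = 1)
    (hdet_mul : ∀ A B : H →L[ℂ] H, IsTraceClass A → IsTraceClass B →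
      det ((1 + A) * (1 + B)) = det (1 + A) * det (1 + B))
    (hdet_rankOne : ∀ u v : H, det (1 + (innerSL ℂ v).smulRight u) = 1 + (inner ℂ v u : ℂ))
    (hdet_cont : ∀ (A : ℕ → H →L[ℂ] H) (B : H →L[ℂ] H), (∀ n, IsTraceClass (A n)) →
      IsTraceClass B → Tendsto (fun n => traceNorm (A n - B)) atTop (nhds 0) →
      Tendsto (fun n => det (1 + A n)) atTop (nhds (det (1 + B))))
    (A : H →L[ℂ] H) (hA : IsTraceClass A) (hinv : IsUnit (1 + A))
    (P Q : H →L[ℂ] H) (hP : P * P = P) (hQ : Q = 1 - P) :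
    det (P * Ring.inverse (1 + A) * P + Q) = det (1 + Q * A * Q) / det (1 + A) := by
  classical
  set B := Ring.inverse (1 + A) with hBdef
  have hB1 : (1 + A) * B = 1 := Ring.mul_inverse_cancel _ hinv
  have hB2 : B * (1 + A) = 1 := Ring.inverse_mul_cancel _ hinv
  have hBA0 : B * A = 1 - B := by
    have h : B * (1 + A) = B + B * A := by noncomm_ring
    rw [h] at hB2
    rw [← hB2]
    abel
  have hAB0 : A * B = 1 - B := by
    have h : (1 + A) * B = B + A * B := by noncomm_ring
    rw [h] at hB1
    rw [← hB1]
    abel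
  have hP' : ∀ X : H →L[ℂ] H, P * (P * X) = P * X := fun X => by rw [← mul_assoc, hP]
  have hBA' : ∀ X : H →L[ℂ] H, B * (A * X) = X - B * X := fun X => by
    rw [← mul_assoc, hBA0, sub_mul, one_mul]
  have hAB' : ∀ X : H →L[ℂ] H, A * (B * X) = X - B * X := fun X => by
    rw [← mul_assoc, hAB0, sub_mul, one_mul]
  have hQP : Q * P = 0 := by rw [hQ, sub_mul, one_mul, hP, sub_self]
  have hPQ : P * Q = 0 := by rw [hQ, mul_sub, mul_one, hP, sub_self]
  have hQQ : Q * Q = Q := by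
    rw [hQ]
    have h : (1 - P) * (1 - P) = 1 - P - P + P * P := by noncomm_ring
    rw [h, hP]
    abel
  -- trace class facts
  have tcQAQ : IsTraceClass (Q * A * Q) := tc_conj hA Q Q
  have tcQAP : IsTraceClass (Q * A * P) := tc_conj hA Q P
  have tcPBAP : IsTraceClass (P * B * A * P) := tc_conj hA (P * B) P
  have tcPBA : IsTraceClass (P * B * A) := by
    have h := tc_conj hA (P * B) 1
    rwa [mul_one] at h
  have tcBA : IsTraceClass (B * A) := by
    have h := tc_conj hA B 1
    rwa [mul_one] at h
  have tcPBQ : IsTraceClass (P * B * Q) := by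
    have hrw : P * B * Q = -(P * B) * A * Q := by
      rw [hQ]
      simp only [mul_add, add_mul, mul_sub, sub_mul, mul_one, one_mul, mul_assoc, hP, hP',
        hBA', hAB', hBA0, hAB0, mul_neg, neg_mul]
      abel
    rw [hrw]
    exact tc_conj hA _ _
  -- unipotent determinants
  have hdetPBQ : det (1 + P * B * Q) = 1 := by
    refine det_unipotent det hdet_one hdet_mul hdet_rankOne hdet_cont _ P Q tcPBQ ?_ hQP
    have h1 : P * (P * B * Q) = P * B * Q := by
      rw [← mul_assoc, ← mul_assoc, hP]
    have h2 : P * B * Q * Q = P * B * Q := by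
      rw [mul_assoc, hQQ]
    rw [h1, h2]
  have hdetQAP : det (1 + Q * A * P) = 1 := by
    refine det_unipotent det hdet_one hdet_mul hdet_rankOne hdet_cont _ Q P tcQAP ?_ hPQ
    have h1 : Q * (Q * A * P) = Q * A * P := by
      rw [← mul_assoc, ← mul_assoc, hQQ]
    have h2 : Q * A * P * P = Q * A * P := by
      rw [mul_assoc, hP]
    rw [h1, h2]
  -- operator identities
  have hX : P * B * P + Q = 1 + -(P * B * A * P) := by
    rw [hQ]
    simp only [mul_add, add_mul, mul_sub, sub_mul, mul_one, one_mul, mul_assoc, hP, hP',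
      hBA', hAB', hBA0, hAB0, mul_neg, neg_mul]
    abel
  have hI1 : (1 + P * B * Q) * (1 + -(P * B * A * P)) = 1 + -(P * B * A) := by
    rw [hQ]
    simp only [mul_add, add_mul, mul_sub, sub_mul, mul_one, one_mul, mul_assoc, hP, hP',
      hBA', hAB', hBA0, hAB0, mul_neg, neg_mul]
    abel
  have hI2 : (1 + -(P * B * A)) * (1 + A) = 1 + Q * A := by
    rw [hQ]
    simp only [mul_add, add_mul, mul_sub, sub_mul, mul_one, one_mul, mul_assoc, hP, hP',
      hBA', hAB', hBA0, hAB0, mul_neg, neg_mul]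
    abel
  have hI3 : (1 + Q * A * P) * (1 + Q * A * Q) = 1 + Q * A := by
    rw [hQ]
    simp only [mul_add, add_mul, mul_sub, sub_mul, mul_one, one_mul, mul_assoc, hP, hP',
      hBA', hAB', hBA0, hAB0, mul_neg, neg_mul]
    abel
  have hIB : (1 + A) * (1 + -(B * A)) = 1 := by
    simp only [mul_add, add_mul, mul_sub, sub_mul, mul_one, one_mul, mul_assoc, hP, hP',
      hBA', hAB', hBA0, hAB0, mul_neg, neg_mul]
    abel
  have tcQA : IsTraceClass (Q * A) := by
    have h := tc_conj hA Q 1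
    rwa [mul_one] at h
  -- determinant computations
  have hdet1 : det (1 + -(P * B * A)) = det (1 + -(P * B * A * P)) := by
    rw [← hI1, hdet_mul _ _ tcPBQ (tc_neg tcPBAP), hdetPBQ, one_mul]
  have hdet2 : det (1 + -(P * B * A)) * det (1 + A) = det (1 + Q * A) := by
    rw [← hdet_mul _ _ (tc_neg tcPBA) hA, hI2]
  have hdet3 : det (1 + Q * A) = det (1 + Q * A * Q) := by
    rw [← hI3, hdet_mul _ _ tcQAP tcQAQ, hdetQAP, one_mul]
  have hdet4 : det (1 + A) * det (1 + -(B * A)) = 1 := by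
    rw [← hdet_mul _ _ hA (tc_neg tcBA), hIB, hdet_one]
  have hdetA_ne : det (1 + A) ≠ 0 := by
    intro h
    rw [h, zero_mul] at hdet4
    exact one_ne_zero hdet4.symm
  rw [show P * B * P + Q = 1 + -(P * B * A * P) from hX]
  rw [← hdet1]
  rw [eq_div_iff hdetA_ne]
  rw [hdet2, hdet3]


end
end

section
/- Let A_n be a sequence of bounded linear operators on a Hilbert space H converging strongly to an invertible operator A. Then A_n^{-1} converges strongly to A^{-1} if and only if the sequence (A_n) is stable, i.e., the A_n are invertible for all sufficiently large n and sup_{n ≥ n_0} ‖A_n^{-1}‖ < ∞ for some n_0. -/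
open Filter

/-- Let `A n → A` strongly on a Hilbert space `H`, with `A` invertible. Then the inverses
`(A n)⁻¹` exist for large `n` and converge strongly to `A⁻¹` if and only if the sequence
`(A n)` is stable, i.e. the `A n` are invertible for all large `n` with uniformly bounded
inverses. -/
theorem strong_convergence_of_inverses_iff_stable
    {H : Type*} [NormedAddCommGroup H] [InnerProductSpace ℂ H] [CompleteSpace H]
    (A : ℕ → H →L[ℂ] H) (A₀ : H →L[ℂ] H) (hA₀ : IsUnit A₀)
    (hstrong : ∀ x : H, Tendsto (fun n => A n x) atTop (nhds (A₀ x))) :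
    (∃ N : ℕ, (∀ n ≥ N, IsUnit (A n)) ∧
        ∀ x : H, Tendsto (fun n => Ring.inverse (A n) x) atTop (nhds (Ring.inverse A₀ x))) ↔
      (∃ N : ℕ, (∀ n ≥ N, IsUnit (A n)) ∧
        ∃ C : ℝ, ∀ n ≥ N, ‖Ring.inverse (A n)‖ ≤ C) := by
  constructor
  · rintro ⟨N, hN, hconv⟩
    refine ⟨N, hN, ?_⟩
    have h := banach_steinhaus
      (g := fun n : {n : ℕ // N ≤ n} => Ring.inverse (A n.1)) ?_
    · obtain ⟨C, hC⟩ := h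
      exact ⟨C, fun n hn => hC ⟨n, hn⟩⟩
    · intro x
      obtain ⟨C, hC⟩ := ((hconv x).norm).bddAbove_range
      exact ⟨C, fun i => hC (Set.mem_range_self i.1)⟩
  · rintro ⟨N, hN, C, hC⟩
    refine ⟨N, hN, fun x => ?_⟩
    rw [tendsto_iff_norm_sub_tendsto_zero]
    set y := Ring.inverse A₀ x with hy
    have hA₀y : A₀ y = x := by
      have h1 := Ring.mul_inverse_cancel A₀ hA₀
      calc A₀ y = (A₀ * Ring.inverse A₀) x := rfl
        _ = x := by rw [h1]; rfl
    apply squeeze_zero' (Filter.Eventually.of_forall fun n => norm_nonneg _)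
      (g := fun n => C * ‖A n y - A₀ y‖)
    · filter_upwards [Filter.eventually_ge_atTop N] with n hn
      have hinv : Ring.inverse (A n) (A n y) = y := by
        have h2 := Ring.inverse_mul_cancel (A n) (hN n hn)
        calc Ring.inverse (A n) (A n y) = (Ring.inverse (A n) * A n) y := rfl
          _ = y := by rw [h2]; rfl
      have key : Ring.inverse (A n) x - y = Ring.inverse (A n) (A₀ y - A n y) := by
        rw [map_sub, hA₀y, hinv]
      rw [key]
      calc ‖Ring.inverse (A n) (A₀ y - A n y)‖
          ≤ ‖Ring.inverse (A n)‖ * ‖A₀ y - A n y‖ := (Ring.inverse (A n)).le_opNorm _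
        _ ≤ C * ‖A n y - A₀ y‖ := by
            rw [norm_sub_rev]
            exact mul_le_mul_of_nonneg_right (hC n hn) (norm_nonneg _)
    · have h3 : Tendsto (fun n => ‖A n y - A₀ y‖) atTop (nhds 0) := by
        have h4 := (hstrong y).sub_const (A₀ y)
        simpa using h4.norm
      simpa using h3.const_mul C
end

section
/- Let a_n ∈ L^∞(𝕋) be uniformly bounded in the L^∞ norm and converge in measure to a ∈ L^∞(𝕋). Then the Toeplitz operators T(a_n) converge strongly to T(a) on ℓ^2(ℤ_+), the Hankel operators H(a_n) converge strongly to H(a), and the same holds for the adjoint sequences. -/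
open MeasureTheory Real Filter

noncomputable section

/-- The Hilbert space `ℓ²(ℤ₊)`. -/
abbrev ellTwo := lp (fun _ : ℕ => ℂ) 2

/-- The `k`-th Fourier coefficient of the function `θ ↦ a(e^{iθ})`. -/
noncomputable def fCoeff (a : ℝ → ℂ) (k : ℤ) : ℂ :=
  (1 / (2 * (π : ℂ))) * ∫ θ in Set.Ioc (0 : ℝ) (2 * π), a θ * Complex.exp (-Complex.I * k * θ)

open Set AddCircle Complex Topology

local instance fact2pi : Fact (0 < 2 * π) := ⟨Real.two_pi_pos⟩
local notation "μh" => @haarAddCircle (2*π) fact2pi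
local notation "⟪" x ", " y "⟫" => @inner ℂ _ _ x y

lemma fCoeff_eq (f : ℝ → ℂ) (n : ℤ) :
    fCoeff f n = fourierCoeff (AddCircle.liftIoc (2*π) 0 f) n := by
  have hπ : (π : ℂ) ≠ 0 := by simp [Complex.ofReal_ne_zero, Real.pi_ne_zero]
  rw [fourierCoeff_eq_intervalIntegral _ n 0, zero_add,
    intervalIntegral.integral_of_le Real.two_pi_pos.le]
  rw [MeasureTheory.setIntegral_congr_fun (g := fun x => f x * Complex.exp (-Complex.I * n * x))
    measurableSet_Ioc ?_]
  · rw [fCoeff, Complex.real_smul]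
    push_cast
    rfl
  · intro x hx
    have hx' : x ∈ Set.Ioc (0:ℝ) (0 + 2*π) := by simpa using hx
    dsimp only
    rw [AddCircle.liftIoc_coe_apply hx', smul_eq_mul, fourier_coe_apply, mul_comm]
    congr 1
    congr 1
    push_cast
    field_simp

lemma measurable_liftIoc {f : ℝ → ℂ} (hf : Measurable f) :
    Measurable (AddCircle.liftIoc (2*π) 0 f) := by
  have : AddCircle.liftIoc (2*π) 0 f =
      (fun x : Set.Ioc (0:ℝ) (0+2*π) => f x) ∘ (AddCircle.measurableEquivIoc (2*π) 0) := rfl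
  rw [this]
  exact (hf.comp measurable_subtype_coe).comp (AddCircle.measurableEquivIoc _ _).measurable

lemma norm_liftIoc_le {f : ℝ → ℂ} {D : ℝ} (hf : ∀ θ, ‖f θ‖ ≤ D) (z : AddCircle (2*π)) :
    ‖AddCircle.liftIoc (2*π) 0 f z‖ ≤ D := hf _

lemma Lp_norm_sq (g : Lp ℂ 2 μh) (G : AddCircle (2*π) → ℂ)
    (hg : ⇑g =ᵐ[μh] G) : ‖g‖^2 = ∫ t, ‖G t‖^2 ∂μh := by
  have H₂ : ‖g‖ ^ 2 = RCLike.re (⟪g, g⟫) := by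
    rw [@norm_sq_eq_re_inner ℂ]
  have H₃ := congr_arg RCLike.re (@L2.inner_def (AddCircle (2*π)) ℂ ℂ _ _ _ _ _ g g)
  rw [← integral_re (L2.integrable_inner g g)] at H₃
  simp only [← norm_sq_eq_re_inner] at H₃
  rw [H₃]
  exact integral_congr_ae (hg.mono fun t ht => by dsimp only; rw [ht])

lemma bessel (F : AddCircle (2*π) → ℂ) (hF : MemLp F 2 μh) (ι : ℕ → ℤ)
    (hι : Function.Injective ι) :
    ∑' j : ℕ, ‖fourierCoeff F (ι j)‖^2 ≤ ∫ t, ‖F t‖^2 ∂μh := by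
  have h1 : ∀ m : ℤ, fourierCoeff F m = ⟪fourierLp 2 m, hF.toLp F⟫ := by
    intro m
    have : fourierCoeff (⇑(hF.toLp F)) m = fourierCoeff F m :=
      integral_congr_ae ((hF.coeFn_toLp).mono fun t ht => by dsimp only; rw [ht])
    rw [← this, ← fourierBasis_repr, fourierBasis.repr_apply_apply, coe_fourierBasis]
  calc ∑' j : ℕ, ‖fourierCoeff F (ι j)‖^2
      = ∑' j : ℕ, ‖⟪(fun m => fourierLp 2 m) (ι j), hF.toLp F⟫‖^2 := by simp_rw [h1]
    _ ≤ ‖hF.toLp F‖^2 := (orthonormal_fourier.comp ι hι).tsum_inner_products_le _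
    _ = ∫ t, ‖F t‖^2 ∂μh := Lp_norm_sq _ _ hF.coeFn_toLp

lemma integral_haar_eq (g : AddCircle (2*π) → ℝ) :
    ∫ t, g t ∂μh = (1/(2*π)) * ∫ θ in Set.Ioc (0:ℝ) (2*π), g θ := by
  have h1 : ∫ θ in Set.Ioc (0:ℝ) (0+2*π), g θ = ∫ t, g t ∂(volume : Measure (AddCircle (2*π))) :=
    AddCircle.integral_preimage (2*π) 0 g
  rw [zero_add] at h1
  rw [h1, volume_eq_smul_haarAddCircle, integral_smul_measure,
    ENNReal.toReal_ofReal Real.two_pi_pos.le, smul_eq_mul, ← mul_assoc]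
  rw [one_div, inv_mul_cancel₀ Real.two_pi_pos.ne', one_mul]

lemma norm_fourier (n : ℤ) (x : AddCircle (2*π)) : ‖fourier n x‖ = 1 := by
  simp [fourier_apply, Circle.norm_coe]

lemma fourierCoeff_fourier_mul (g : AddCircle (2*π) → ℂ) (m j : ℤ) :
    fourierCoeff (fun t => fourier m t * g t) j = fourierCoeff g (j - m) := by
  unfold fourierCoeff
  congr 1
  funext t
  have : fourier (-(j-m)) t = fourier (-j) t * fourier m t := by
    rw [← fourier_add]; congr 1; ring
  rw [smul_eq_mul, smul_eq_mul, this]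
  ring

lemma fCoeff_sub {g h : ℝ → ℂ} (hg : Measurable g) (hh : Measurable h)
    {Dg Dh : ℝ} (hgb : ∀ θ, ‖g θ‖ ≤ Dg) (hhb : ∀ θ, ‖h θ‖ ≤ Dh) (m : ℤ) :
    fCoeff (fun θ => g θ - h θ) m = fCoeff g m - fCoeff h m := by
  unfold fCoeff
  rw [← mul_sub]
  congr 1
  have key : ∀ (f : ℝ → ℂ), Measurable f → ∀ D : ℝ, (∀ θ, ‖f θ‖ ≤ D) →
      Integrable (fun θ => f θ * Complex.exp (-Complex.I * m * θ))
        (volume.restrict (Set.Ioc (0:ℝ) (2*π))) := by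
    intro f hf D hfD
    refine ⟨((hf.mul (by measurability)).aestronglyMeasurable), ?_⟩
    refine HasFiniteIntegral.of_bounded (C := D) (Eventually.of_forall fun θ => ?_)
    rw [norm_mul]
    have : ‖Complex.exp (-Complex.I * m * θ)‖ = 1 := by
      rw [show (-Complex.I * m * θ : ℂ) = Complex.I * (-m * θ : ℝ) by push_cast; ring]
      rw [mul_comm, Complex.norm_exp_ofReal_mul_I]
    rw [this, mul_one]
    exact hfD θ
  rw [← integral_sub (key g hg Dg hgb) (key h hh Dh hhb)]
  congr 1
  funext θ
  ring

lemma integrable_of_bdd {g : AddCircle (2*π) → ℂ} (hg : AEStronglyMeasurable g μh)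
    (D : ℝ) (hD : ∀ t, ‖g t‖ ≤ D) : Integrable g μh :=
  ⟨hg, HasFiniteIntegral.of_bounded (C := D) (Eventually.of_forall hD)⟩

lemma integrable_sq_of_bdd {g : AddCircle (2*π) → ℂ} (hg : Measurable g) (D : ℝ)
    (hD : ∀ t, ‖g t‖ ≤ D) : Integrable (fun t => ‖g t‖^2) μh :=
  ⟨(hg.norm.pow_const 2).aestronglyMeasurable,
    HasFiniteIntegral.of_bounded (C := D^2) (.of_forall fun t => by
      rw [Real.norm_eq_abs, _root_.abs_of_nonneg (by positivity)]
      exact pow_le_pow_left₀ (norm_nonneg _) (hD t) 2)⟩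

lemma ellTwo_norm_sq (f : ellTwo) : ‖f‖^2 = ∑' j : ℕ, ‖f j‖^2 := by
  apply_mod_cast lp.norm_rpow_eq_tsum ?_ f
  norm_num

lemma ellTwo_norm_sum_single_sq (s : Finset ℕ) (c : ℕ → ℂ) :
    ‖∑ k ∈ s, lp.single (E := fun _ : ℕ => ℂ) 2 k (c k)‖^2 = ∑ k ∈ s, ‖c k‖^2 := by
  apply_mod_cast lp.norm_sum_single (p := 2) ?_ c s
  norm_num

lemma fourierCoeff_finset_sum {ι' : Type*} (s : Finset ι') (F : ι' → AddCircle (2*π) → ℂ)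
    (hF : ∀ k ∈ s, Integrable (F k) μh) (j : ℤ) :
    fourierCoeff (fun t => ∑ k ∈ s, F k t) j = ∑ k ∈ s, fourierCoeff (F k) j := by
  unfold fourierCoeff
  rw [← integral_finset_sum]
  · congr 1; funext t; rw [Finset.smul_sum]
  · intro k hk
    simpa [smul_eq_mul] using (hF k hk).bdd_mul
      ((fourier (-j)).continuous.measurable.aestronglyMeasurable)
      (Eventually.of_forall fun t => (norm_fourier _ _).le)

lemma apply_sum_eq (b : ℝ → ℂ) (hmb : Measurable b) {C : ℝ} (hb : ∀ θ, ‖b θ‖ ≤ C)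
    (ν : ℕ → ℤ) (s : Finset ℕ) (c : ℕ → ℂ) (j : ℤ) :
    ∑ k ∈ s, c k * fCoeff b (j - ν k)
      = fourierCoeff (fun t => (AddCircle.liftIoc (2*π) 0 b) t
          * ∑ k ∈ s, c k * fourier (ν k) t) j := by
  have hrw : (fun t => (AddCircle.liftIoc (2*π) 0 b) t * ∑ k ∈ s, c k * fourier (ν k) t)
      = fun t => ∑ k ∈ s, c k * (fourier (ν k) t * (AddCircle.liftIoc (2*π) 0 b) t) := by
    funext t; rw [Finset.mul_sum]; exact Finset.sum_congr rfl fun k _ => by ring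
  rw [hrw, fourierCoeff_finset_sum]
  · exact Finset.sum_congr rfl fun k _ => by
      rw [fourierCoeff.const_mul, fourierCoeff_fourier_mul, ← fCoeff_eq]
  · intro k _
    refine Integrable.const_mul ?_ _
    refine integrable_of_bdd ?_ C ?_
    · exact ((fourier (ν k)).continuous.measurable.mul
        (measurable_liftIoc hmb)).aestronglyMeasurable
    · intro t; rw [norm_mul, norm_fourier, one_mul]; exact norm_liftIoc_le hb t

lemma Pc_norm (s : Finset ℕ) (c : ℕ → ℂ) (ν : ℕ → ℤ) (hν : Function.Injective ν) :
    ∫ t, ‖∑ k ∈ s, c k * fourier (ν k) t‖^2 ∂μh = ∑ k ∈ s, ‖c k‖^2 := by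
  set CM : C(AddCircle (2*π), ℂ) := ∑ k ∈ s, c k • fourier (ν k) with hCM
  set PL : Lp ℂ 2 μh := ∑ k ∈ s, c k • fourierLp 2 (ν k) with hPL
  have hPL' : PL = ContinuousMap.toLp (E := ℂ) 2 μh ℂ CM := by
    rw [hPL, hCM, map_sum]
    exact Finset.sum_congr rfl fun k _ => by
      rw [(ContinuousMap.toLp (E := ℂ) 2 μh ℂ).map_smul]
  have hcoe : ⇑PL =ᵐ[μh] (fun t => ∑ k ∈ s, c k * fourier (ν k) t) := by
    rw [hPL']
    refine (ContinuousMap.coeFn_toLp μh CM).trans (Eventually.of_forall fun t => ?_)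
    simp [hCM, smul_eq_mul]
  rw [← Lp_norm_sq PL _ hcoe]
  have hON : Orthonormal ℂ (fun k : ℤ => fourierLp (T := 2*π) 2 k) := orthonormal_fourier
  have hON2 : Orthonormal ℂ (fun k : ℕ => fourierLp (T := 2*π) 2 (ν k)) := hON.comp ν hν
  have hinner := hON2.inner_sum c c s
  have : (‖PL‖:ℝ)^2 = RCLike.re (⟪PL, PL⟫) := by rw [@norm_sq_eq_re_inner ℂ]
  rw [this, hPL, hinner]
  rw [map_sum]
  exact Finset.sum_congr rfl fun k _ => by
    rw [RCLike.conj_mul]; norm_cast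

lemma opnorm_le (b : ℝ → ℂ) {C : ℝ} (hC : 0 ≤ C) (hb : ∀ θ, ‖b θ‖ ≤ C) (hmb : Measurable b)
    (A : ellTwo →L[ℂ] ellTwo) (ν : ℕ → ℤ) (hν : Function.Injective ν)
    (hA : ∀ j k : ℕ, A (lp.single 2 k 1) j = fCoeff b ((j:ℤ) - ν k)) : ‖A‖ ≤ C := by
  refine A.opNorm_le_bound hC (fun x => ?_)
  have hs : HasSum (fun k : ℕ => lp.single 2 k (x k)) x :=
    lp.hasSum_single (by norm_num) x
  have h1 : Tendsto (fun s : Finset ℕ => ‖A (∑ k ∈ s, lp.single 2 k (x k))‖) atTop (𝓝 ‖A x‖) :=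
    ((A.continuous.tendsto x).comp hs).norm
  have h2 : Tendsto (fun s : Finset ℕ => C * ‖∑ k ∈ s, lp.single 2 k (x k)‖) atTop
      (𝓝 (C * ‖x‖)) := (Filter.Tendsto.norm hs).const_mul C
  refine le_of_tendsto_of_tendsto' h1 h2 (fun s => ?_)
  set c : ℕ → ℂ := fun k => x k with hc
  set y : ellTwo := ∑ k ∈ s, lp.single 2 k (c k) with hy
  set B := AddCircle.liftIoc (2*π) 0 b with hB
  set P : AddCircle (2*π) → ℂ := fun t => ∑ k ∈ s, c k * fourier (ν k) t with hP
  set G : AddCircle (2*π) → ℂ := fun t => B t * P t with hG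
  have hPm : Measurable P := by
    rw [hP]; exact Finset.measurable_sum s fun k _ =>
      (fourier (ν k)).continuous.measurable.const_mul (c k)
  have hGm : Measurable G := (measurable_liftIoc hmb).mul hPm
  have hPb : ∀ t, ‖P t‖ ≤ ∑ k ∈ s, ‖c k‖ := fun t => (norm_sum_le _ _).trans
    (le_of_eq (Finset.sum_congr rfl fun k _ => by rw [norm_mul, norm_fourier, mul_one]))
  have hBb : ∀ t, ‖B t‖ ≤ C := fun t => norm_liftIoc_le hb t
  have hGb : ∀ t, ‖G t‖ ≤ C * ∑ k ∈ s, ‖c k‖ := fun t => by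
    rw [hG]; dsimp only
    rw [norm_mul]
    exact mul_le_mul (hBb t) (hPb t) (norm_nonneg _) hC
  have hGmem : MemLp G 2 μh :=
    MemLp.of_bound hGm.aestronglyMeasurable _ (Eventually.of_forall hGb)
  -- entries of A y
  have hyA : ∀ j : ℕ, (A y) j = fourierCoeff G (j:ℤ) := by
    intro j
    have hy2 : A y = ∑ k ∈ s, c k • A (lp.single 2 k 1) := by
      rw [hy, map_sum]
      refine Finset.sum_congr rfl fun k _ => ?_
      rw [show lp.single (E := fun _ : ℕ => ℂ) 2 k (c k) = c k • lp.single 2 k (1:ℂ) by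
        rw [← lp.single_smul]; congr 1; simp, _root_.map_smul]
    rw [hy2]
    have : (↑(∑ k ∈ s, c k • A (lp.single 2 k 1)) : ∀ _ : ℕ, ℂ) j
        = ∑ k ∈ s, c k * (A (lp.single 2 k 1)) j := by
      rw [lp.coeFn_sum, Finset.sum_apply]
      exact Finset.sum_congr rfl fun k _ => by rw [lp.coeFn_smul, Pi.smul_apply, smul_eq_mul]
    rw [this]
    calc ∑ k ∈ s, c k * (A (lp.single 2 k 1)) j
        = ∑ k ∈ s, c k * fCoeff b ((j:ℤ) - ν k) :=
          Finset.sum_congr rfl fun k _ => by rw [hA j k]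
      _ = fourierCoeff G (j:ℤ) := by rw [apply_sum_eq b hmb hb ν s c]
  -- squares
  have hsq : ‖A y‖^2 ≤ C^2 * ‖y‖^2 := by
    have e1 : ‖A y‖^2 = ∑' j : ℕ, ‖fourierCoeff G ((j:ℕ):ℤ)‖^2 := by
      rw [ellTwo_norm_sq]
      exact tsum_congr fun j => by rw [hyA j]
    have e2 := bessel G hGmem (fun j : ℕ => (j:ℤ)) Nat.cast_injective
    have e3 : ∫ t, ‖G t‖^2 ∂μh ≤ C^2 * ∑ k ∈ s, ‖c k‖^2 := by
      have mono : ∫ t, ‖G t‖^2 ∂μh ≤ ∫ t, C^2 * ‖P t‖^2 ∂μh := by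
        refine integral_mono (integrable_sq_of_bdd hGm _ hGb) ?_ ?_
        · exact (integrable_sq_of_bdd hPm _ hPb).const_mul _
        · intro t
          dsimp only
          rw [hG]; dsimp only; rw [norm_mul, mul_pow]
          exact mul_le_mul_of_nonneg_right
            (pow_le_pow_left₀ (norm_nonneg _) (hBb t) 2) (by positivity)
      refine mono.trans (le_of_eq ?_)
      rw [integral_const_mul, Pc_norm s c ν hν]
    calc ‖A y‖^2 = ∑' j : ℕ, ‖fourierCoeff G ((j:ℕ):ℤ)‖^2 := e1
      _ ≤ ∫ t, ‖G t‖^2 ∂μh := e2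
      _ ≤ C^2 * ∑ k ∈ s, ‖c k‖^2 := e3
      _ = C^2 * ‖y‖^2 := by rw [hy, ellTwo_norm_sum_single_sq]
  have := Real.sqrt_le_sqrt hsq
  rw [Real.sqrt_sq (norm_nonneg _)] at this
  rw [show C^2 * ‖y‖^2 = (C*‖y‖)^2 by ring, Real.sqrt_sq (by positivity)] at this
  exact this

lemma integral_sq_tendsto (a : ℕ → ℝ → ℂ) (a₀ : ℝ → ℂ) (C : ℝ)
    (hbound : ∀ n θ, ‖a n θ‖ ≤ C) (hbound₀ : ∀ θ, ‖a₀ θ‖ ≤ C)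
    (hmeas : ∀ n, Measurable (a n)) (hmeas₀ : Measurable a₀)
    (hconv : ∀ ε : ℝ, 0 < ε →
      Tendsto (fun n => volume {θ ∈ Set.Ioc (0 : ℝ) (2 * π) | ε ≤ ‖a n θ - a₀ θ‖})
        atTop (𝓝 0)) :
    Tendsto (fun n => ∫ θ in Set.Ioc (0:ℝ) (2*π), ‖a n θ - a₀ θ‖^2) atTop (𝓝 0) := by
  have hC : 0 ≤ C := le_trans (norm_nonneg _) (hbound 0 0)
  haveI : IsFiniteMeasure (volume.restrict (Set.Ioc (0:ℝ) (2*π))) :=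
    ⟨by rw [Measure.restrict_apply_univ]; exact measure_Ioc_lt_top⟩
  set K : ℝ := 2*C+1 with hK
  have hKpos : 0 < K := by positivity
  rw [Metric.tendsto_atTop]
  intro ε hε
  set ε' : ℝ := min 1 (ε/(8*π+2)) with hε'def
  have hε' : 0 < ε' := lt_min one_pos (by positivity)
  have hμ : ∀ᶠ n in atTop,
      volume {θ ∈ Set.Ioc (0 : ℝ) (2 * π) | ε' ≤ ‖a n θ - a₀ θ‖}
        < ENNReal.ofReal (ε/(4*K^2)) := by
    refine (hconv ε' hε').eventually_lt_const ?_
    exact ENNReal.ofReal_pos.mpr (by positivity)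
  obtain ⟨N, hN⟩ := eventually_atTop.mp hμ
  refine ⟨N, fun n hn => ?_⟩
  set d : ℝ → ℝ := fun θ => ‖a n θ - a₀ θ‖^2 with hd
  set E : Set ℝ := {θ ∈ Set.Ioc (0:ℝ) (2*π) | ε' ≤ ‖a n θ - a₀ θ‖} with hE
  have hdm : Measurable d := ((hmeas n).sub hmeas₀).norm.pow_const 2
  have hdb : ∀ θ, ‖d θ‖ ≤ K^2 := by
    intro θ
    rw [hd]; dsimp only
    rw [Real.norm_eq_abs, _root_.abs_of_nonneg (by positivity)]
    have h1 : ‖a n θ - a₀ θ‖ ≤ K := by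
      have := norm_sub_le (a n θ) (a₀ θ)
      have h2 := hbound n θ; have h3 := hbound₀ θ
      rw [hK]; linarith
    exact pow_le_pow_left₀ (norm_nonneg _) h1 2
  have hd0 : ∀ θ, 0 ≤ d θ := fun θ => by positivity
  have hEm : MeasurableSet E := by
    have : E = Set.Ioc (0:ℝ) (2*π) ∩ {θ | ε' ≤ ‖a n θ - a₀ θ‖} := rfl
    rw [this]
    exact measurableSet_Ioc.inter
      (measurableSet_le measurable_const ((hmeas n).sub hmeas₀).norm)
  have hEsub : E ⊆ Set.Ioc (0:ℝ) (2*π) := fun θ hθ => hθ.1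
  have hEfin : volume E < ⊤ := lt_of_le_of_lt (measure_mono hEsub) measure_Ioc_lt_top
  have hInt : ∀ s : Set ℝ, s ⊆ Set.Ioc (0:ℝ) (2*π) → IntegrableOn d s volume := by
    intro s hsub
    refine IntegrableOn.mono_set ?_ hsub
    exact ⟨hdm.aestronglyMeasurable, HasFiniteIntegral.of_bounded (C := K^2)
      (Eventually.of_forall hdb)⟩
  have hsplit : ∫ θ in Set.Ioc (0:ℝ) (2*π), d θ
      = (∫ θ in E, d θ) + ∫ θ in (Set.Ioc (0:ℝ) (2*π)) \ E, d θ := by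
    rw [← setIntegral_union (disjoint_sdiff_right) (measurableSet_Ioc.diff hEm)
      (hInt E hEsub) (hInt _ diff_subset), Set.union_diff_cancel hEsub]
  have part1 : ∫ θ in E, d θ ≤ ε/4 := by
    have h1 : ‖∫ θ in E, d θ‖ ≤ K^2 * (volume E).toReal :=
      norm_setIntegral_le_of_norm_le_const hEfin (fun θ _ => hdb θ)
    have h2 : (volume E).toReal ≤ ε/(4*K^2) := by
      have := ENNReal.toReal_mono (ENNReal.ofReal_ne_top) (le_of_lt (hN n hn))
      rwa [ENNReal.toReal_ofReal (by positivity)] at this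
    calc ∫ θ in E, d θ ≤ ‖∫ θ in E, d θ‖ := le_abs_self _
      _ ≤ K^2 * (volume E).toReal := h1
      _ ≤ K^2 * (ε/(4*K^2)) := by
          exact mul_le_mul_of_nonneg_left h2 (by positivity)
      _ = ε/4 := by field_simp
  have part2 : ∫ θ in (Set.Ioc (0:ℝ) (2*π)) \ E, d θ ≤ ε/2 := by
    have hb2 : ∀ θ ∈ (Set.Ioc (0:ℝ) (2*π)) \ E, ‖d θ‖ ≤ ε'^2 := by
      intro θ hθ
      have hlt : ‖a n θ - a₀ θ‖ < ε' := by
        by_contra hcon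
        exact hθ.2 ⟨hθ.1, le_of_not_gt hcon⟩
      rw [hd]; dsimp only
      rw [Real.norm_eq_abs, _root_.abs_of_nonneg (by positivity)]
      exact pow_le_pow_left₀ (norm_nonneg _) hlt.le 2
    have hfin : volume ((Set.Ioc (0:ℝ) (2*π)) \ E) < ⊤ :=
      lt_of_le_of_lt (measure_mono diff_subset) measure_Ioc_lt_top
    have h1 : ‖∫ θ in (Set.Ioc (0:ℝ) (2*π)) \ E, d θ‖
        ≤ ε'^2 * (volume ((Set.Ioc (0:ℝ) (2*π)) \ E)).toReal :=
      norm_setIntegral_le_of_norm_le_const hfin hb2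
    have h2 : (volume ((Set.Ioc (0:ℝ) (2*π)) \ E)).toReal ≤ 2*π := by
      have hm : volume ((Set.Ioc (0:ℝ) (2*π)) \ E) ≤ ENNReal.ofReal (2*π) := by
        refine le_trans (measure_mono diff_subset) ?_
        rw [Real.volume_Ioc, sub_zero]
      have := ENNReal.toReal_mono (ENNReal.ofReal_ne_top) hm
      rwa [ENNReal.toReal_ofReal Real.two_pi_pos.le] at this
    have hε'le : ε' ≤ 1 := min_le_left _ _
    have hε'le2 : ε' ≤ ε/(8*π+2) := min_le_right _ _
    calc ∫ θ in (Set.Ioc (0:ℝ) (2*π)) \ E, d θ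
        ≤ ‖∫ θ in (Set.Ioc (0:ℝ) (2*π)) \ E, d θ‖ := le_abs_self _
      _ ≤ ε'^2 * (volume ((Set.Ioc (0:ℝ) (2*π)) \ E)).toReal := h1
      _ ≤ ε' * (2*π) := by
          have : ε'^2 ≤ ε' := by nlinarith
          exact mul_le_mul this h2 (by positivity) hε'.le
      _ ≤ ε/2 := by
          have hπ := Real.pi_pos
          rw [le_div_iff₀ (by positivity : (0:ℝ) < 8*π+2)] at hε'le2
          nlinarith
  have hIpos : 0 ≤ ∫ θ in Set.Ioc (0:ℝ) (2*π), d θ :=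
    setIntegral_nonneg measurableSet_Ioc (fun θ _ => hd0 θ)
  rw [Real.dist_eq, sub_zero, _root_.abs_of_nonneg hIpos]
  calc ∫ θ in Set.Ioc (0:ℝ) (2*π), d θ
      = (∫ θ in E, d θ) + ∫ θ in (Set.Ioc (0:ℝ) (2*π)) \ E, d θ := hsplit
    _ ≤ ε/4 + ε/2 := add_le_add part1 part2
    _ < ε := by linarith

lemma col_sq_le (f : ℝ → ℂ) (hf : Measurable f) (D : ℝ) (hfD : ∀ θ, ‖f θ‖ ≤ D)
    (ι : ℕ → ℤ) (hι : Function.Injective ι) (v : ellTwo)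
    (hv : ∀ j : ℕ, ‖v j‖ = ‖fCoeff f (ι j)‖) :
    ‖v‖^2 ≤ (1/(2*π)) * ∫ θ in Set.Ioc (0:ℝ) (2*π), ‖f θ‖^2 := by
  have hmem : MemLp (AddCircle.liftIoc (2*π) 0 f) 2 μh :=
    MemLp.of_bound (measurable_liftIoc hf).aestronglyMeasurable D
      (Eventually.of_forall (norm_liftIoc_le hfD))
  have h1 : ‖v‖^2 = ∑' j : ℕ, ‖fourierCoeff (AddCircle.liftIoc (2*π) 0 f) (ι j)‖^2 := by
    rw [ellTwo_norm_sq]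
    exact tsum_congr fun j => by rw [hv j, fCoeff_eq]
  have h2 := bessel _ hmem ι hι
  have h3 : ∫ t, ‖(AddCircle.liftIoc (2*π) 0 f) t‖^2 ∂μh
      = (1/(2*π)) * ∫ θ in Set.Ioc (0:ℝ) (2*π), ‖f θ‖^2 := by
    rw [integral_haar_eq (fun t => ‖(AddCircle.liftIoc (2*π) 0 f) t‖^2)]
    congr 1
    refine setIntegral_congr_fun measurableSet_Ioc fun θ hθ => ?_
    rw [AddCircle.liftIoc_coe_apply (by simpa using hθ)]
  rw [h1, ← h3]
  exact h2

lemma col_tendsto (a : ℕ → ℝ → ℂ) (a₀ : ℝ → ℂ) (C : ℝ)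
    (hbound : ∀ n θ, ‖a n θ‖ ≤ C) (hbound₀ : ∀ θ, ‖a₀ θ‖ ≤ C)
    (hmeas : ∀ n, Measurable (a n)) (hmeas₀ : Measurable a₀)
    (hconv : ∀ ε : ℝ, 0 < ε →
      Tendsto (fun n => volume {θ ∈ Set.Ioc (0 : ℝ) (2 * π) | ε ≤ ‖a n θ - a₀ θ‖})
        atTop (𝓝 0))
    (ι : ℕ → ℤ) (hι : Function.Injective ι) (v : ℕ → ellTwo)
    (hv : ∀ n, ∀ j : ℕ, ‖(v n) j‖ = ‖fCoeff (fun θ => a n θ - a₀ θ) (ι j)‖) :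
    Tendsto v atTop (𝓝 0) := by
  rw [tendsto_zero_iff_norm_tendsto_zero]
  have key : ∀ n, ‖v n‖
      ≤ Real.sqrt ((1/(2*π)) * ∫ θ in Set.Ioc (0:ℝ) (2*π), ‖a n θ - a₀ θ‖^2) := by
    intro n
    have h := col_sq_le (fun θ => a n θ - a₀ θ) ((hmeas n).sub hmeas₀) (2*C)
      (fun θ => (norm_sub_le _ _).trans (by linarith [hbound n θ, hbound₀ θ]))
      ι hι (v n) (hv n)
    rw [show ‖v n‖ = Real.sqrt (‖v n‖^2) by rw [Real.sqrt_sq (norm_nonneg _)]]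
    exact Real.sqrt_le_sqrt h
  refine squeeze_zero (fun n => norm_nonneg _) key ?_
  have h0 := integral_sq_tendsto a a₀ C hbound hbound₀ hmeas hmeas₀ hconv
  have h1 : Tendsto (fun n => (1/(2*π)) * ∫ θ in Set.Ioc (0:ℝ) (2*π), ‖a n θ - a₀ θ‖^2)
      atTop (𝓝 0) := by
    simpa using h0.const_mul (1/(2*π))
  have h2 := (Real.continuous_sqrt.tendsto 0).comp h1
  simpa [Function.comp_def, Real.sqrt_zero] using h2

lemma strong_conv (S : ℕ → ellTwo →L[ℂ] ellTwo) (S₀ : ellTwo →L[ℂ] ellTwo) (M : ℝ)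
    (hM : ∀ n, ‖S n‖ ≤ M) (hM₀ : ‖S₀‖ ≤ M)
    (hcol : ∀ k : ℕ, Tendsto (fun n => S n (lp.single 2 k 1)) atTop (𝓝 (S₀ (lp.single 2 k 1)))) :
    ∀ x : ellTwo, Tendsto (fun n => S n x) atTop (𝓝 (S₀ x)) := by
  have hM0 : 0 ≤ M := le_trans (norm_nonneg _) (hM 0)
  intro x
  rw [Metric.tendsto_atTop]
  intro ε hε
  have hs : HasSum (fun k : ℕ => lp.single 2 k (x k)) x := lp.hasSum_single (by norm_num) x
  have hδ : 0 < ε/(3*(M+1)) := by positivity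
  obtain ⟨s, hsmall⟩ : ∃ s : Finset ℕ,
      ‖x - ∑ k ∈ s, lp.single 2 k (x k)‖ < ε/(3*(M+1)) := by
    have := Metric.tendsto_nhds.mp hs (ε/(3*(M+1))) hδ
    obtain ⟨s, hs'⟩ := this.exists
    exact ⟨s, by rwa [dist_comm, dist_eq_norm] at hs'⟩
  set y : ellTwo := ∑ k ∈ s, lp.single 2 k (x k) with hy
  have hyconv : Tendsto (fun n => S n y) atTop (𝓝 (S₀ y)) := by
    have hform : ∀ (A : ellTwo →L[ℂ] ellTwo), A y = ∑ k ∈ s, (x k) • A (lp.single 2 k 1) := by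
      intro A
      rw [hy, map_sum]
      refine Finset.sum_congr rfl fun k _ => ?_
      rw [show lp.single (E := fun _ : ℕ => ℂ) 2 k (x k) = (x k) • lp.single 2 k (1:ℂ) by
        rw [← lp.single_smul]; congr 1; simp, _root_.map_smul]
    simp only [hform]
    exact tendsto_finset_sum _ fun k _ => (hcol k).const_smul (x k)
  obtain ⟨N, hN⟩ := Metric.tendsto_atTop.mp hyconv (ε/3) (by positivity)
  refine ⟨N, fun n hn => ?_⟩
  have hxy : ‖x - y‖ < ε/(3*(M+1)) := hsmall
  have h1 : ‖S n x - S n y‖ ≤ M * (ε/(3*(M+1))) := by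
    rw [← map_sub]
    calc ‖S n (x - y)‖ ≤ ‖S n‖ * ‖x - y‖ := (S n).le_opNorm _
      _ ≤ M * (ε/(3*(M+1))) :=
        mul_le_mul (hM n) hxy.le (norm_nonneg _) hM0
  have h2 : ‖S₀ y - S₀ x‖ ≤ M * (ε/(3*(M+1))) := by
    rw [← map_sub]
    calc ‖S₀ (y - x)‖ ≤ ‖S₀‖ * ‖y - x‖ := S₀.le_opNorm _
      _ ≤ M * (ε/(3*(M+1))) := by
        rw [norm_sub_rev]
        exact mul_le_mul hM₀ hxy.le (norm_nonneg _) hM0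
  have h3 : dist (S n y) (S₀ y) < ε/3 := hN n hn
  have hMlt : M * (ε/(3*(M+1))) < ε/3 := by
    rw [show M * (ε/(3*(M+1))) = (M*ε)/(3*(M+1)) by ring]
    rw [div_lt_div_iff₀ (by positivity) (by norm_num : (0:ℝ) < 3)]
    nlinarith
  calc dist (S n x) (S₀ x)
      ≤ dist (S n x) (S n y) + dist (S n y) (S₀ y) + dist (S₀ y) (S₀ x) := dist_triangle4 _ _ _ _
    _ < ε/3 + ε/3 + ε/3 := by
        refine add_lt_add (add_lt_add_of_le_of_lt ?_ h3) ?_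
        · rw [dist_eq_norm]; exact (lt_of_le_of_lt h1 hMlt).le
        · rw [dist_eq_norm]; exact lt_of_le_of_lt h2 hMlt
    _ = ε := by ring

/-- If `aₙ ∈ L^∞(𝕋)` are uniformly bounded and converge in measure to `a`, then the Toeplitz
operators `T(aₙ)` and the Hankel operators `H(aₙ)` converge strongly on `ℓ²` to `T(a)`, `H(a)`,
and similarly for the adjoints. -/
theorem toeplitz_hankel_strong_convergence
    (a : ℕ → ℝ → ℂ) (a₀ : ℝ → ℂ) (C : ℝ)
    (hbound : ∀ n θ, ‖a n θ‖ ≤ C) (hbound₀ : ∀ θ, ‖a₀ θ‖ ≤ C)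
    (hmeas : ∀ n, Measurable (a n)) (hmeas₀ : Measurable a₀)
    (hconv : ∀ ε : ℝ, 0 < ε →
      Tendsto (fun n => volume {θ ∈ Set.Ioc (0 : ℝ) (2 * π) | ε ≤ ‖a n θ - a₀ θ‖})
        atTop (nhds 0))
    (T : ℕ → ellTwo →L[ℂ] ellTwo) (T₀ : ellTwo →L[ℂ] ellTwo)
    (Hk : ℕ → ellTwo →L[ℂ] ellTwo) (H₀ : ellTwo →L[ℂ] ellTwo)
    (hT : ∀ n j k : ℕ, (T n (lp.single 2 k 1)) j = fCoeff (a n) ((j : ℤ) - (k : ℤ)))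
    (hT₀ : ∀ j k : ℕ, (T₀ (lp.single 2 k 1)) j = fCoeff a₀ ((j : ℤ) - (k : ℤ)))
    (hH : ∀ n j k : ℕ, (Hk n (lp.single 2 k 1)) j = fCoeff (a n) ((j : ℤ) + (k : ℤ) + 1))
    (hH₀ : ∀ j k : ℕ, (H₀ (lp.single 2 k 1)) j = fCoeff a₀ ((j : ℤ) + (k : ℤ) + 1)) :
    (∀ x : ellTwo, Tendsto (fun n => T n x) atTop (nhds (T₀ x))) ∧
    (∀ x : ellTwo, Tendsto (fun n => Hk n x) atTop (nhds (H₀ x))) ∧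
    (∀ x : ellTwo,
      Tendsto (fun n => ContinuousLinearMap.adjoint (T n) x) atTop
        (nhds (ContinuousLinearMap.adjoint T₀ x))) ∧
    (∀ x : ellTwo,
      Tendsto (fun n => ContinuousLinearMap.adjoint (Hk n) x) atTop
        (nhds (ContinuousLinearMap.adjoint H₀ x))) := by
  have hC : 0 ≤ C := le_trans (norm_nonneg _) (hbound 0 0)
  -- operator norm bounds
  have hTn : ∀ n, ‖T n‖ ≤ C := fun n => opnorm_le (a n) hC (hbound n) (hmeas n) (T n)
    (fun k => (k:ℤ)) Nat.cast_injective (fun j k => hT n j k)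
  have hT0 : ‖T₀‖ ≤ C := opnorm_le a₀ hC hbound₀ hmeas₀ T₀
    (fun k => (k:ℤ)) Nat.cast_injective hT₀
  have hνH : Function.Injective (fun k : ℕ => -(k:ℤ)-1) := by
    intro p q h; simp only at h; omega
  have hHn : ∀ n, ‖Hk n‖ ≤ C := fun n => opnorm_le (a n) hC (hbound n) (hmeas n) (Hk n)
    (fun k => -(k:ℤ)-1) hνH (fun j k => by rw [hH n j k]; congr 1; ring)
  have hH0 : ‖H₀‖ ≤ C := opnorm_le a₀ hC hbound₀ hmeas₀ H₀
    (fun k => -(k:ℤ)-1) hνH (fun j k => by rw [hH₀ j k]; congr 1; ring)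
  -- difference of Fourier coefficients
  have hfsub : ∀ n (m : ℤ), fCoeff (fun θ => a n θ - a₀ θ) m = fCoeff (a n) m - fCoeff a₀ m :=
    fun n m => fCoeff_sub (hmeas n) hmeas₀ (hbound n) hbound₀ m
  -- adjoint entries
  have hadj_entry : ∀ (A : ellTwo →L[ℂ] ellTwo) (j k : ℕ),
      (ContinuousLinearMap.adjoint A (lp.single 2 k 1)) j
        = (starRingEnd ℂ) ((A (lp.single 2 j 1)) k) := by
    intro A j k
    have h1 : (ContinuousLinearMap.adjoint A (lp.single 2 k 1)) j
        = ⟪lp.single 2 j (1:ℂ), ContinuousLinearMap.adjoint A (lp.single 2 k 1)⟫ := by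
      rw [lp.inner_single_left]
      simp [RCLike.inner_apply]
    rw [h1, ContinuousLinearMap.adjoint_inner_right, lp.inner_single_right]
    simp [RCLike.inner_apply]
  have hadj_norm : ∀ (A : ellTwo →L[ℂ] ellTwo), ‖ContinuousLinearMap.adjoint A‖ = ‖A‖ :=
    fun A => LinearIsometryEquiv.norm_map ContinuousLinearMap.adjoint A
  -- column convergence
  have hTcol : ∀ k : ℕ, Tendsto (fun n => T n (lp.single 2 k 1)) atTop
      (𝓝 (T₀ (lp.single 2 k 1))) := by
    intro k
    refine tendsto_sub_nhds_zero_iff.mp (col_tendsto a a₀ C hbound hbound₀ hmeas hmeas₀ hconv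
      (fun j => (j:ℤ) - (k:ℤ)) (fun p q h => by simp only at h; omega)
      (fun n => T n (lp.single 2 k 1) - T₀ (lp.single 2 k 1)) ?_)
    intro n j
    rw [lp.coeFn_sub, Pi.sub_apply, hT n j k, hT₀ j k, ← hfsub n]
  have hHcol : ∀ k : ℕ, Tendsto (fun n => Hk n (lp.single 2 k 1)) atTop
      (𝓝 (H₀ (lp.single 2 k 1))) := by
    intro k
    refine tendsto_sub_nhds_zero_iff.mp (col_tendsto a a₀ C hbound hbound₀ hmeas hmeas₀ hconv
      (fun j => (j:ℤ) + (k:ℤ) + 1) (fun p q h => by simp only at h; omega)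
      (fun n => Hk n (lp.single 2 k 1) - H₀ (lp.single 2 k 1)) ?_)
    intro n j
    rw [lp.coeFn_sub, Pi.sub_apply, hH n j k, hH₀ j k, ← hfsub n]
  have hTadjcol : ∀ k : ℕ, Tendsto
      (fun n => ContinuousLinearMap.adjoint (T n) (lp.single 2 k 1)) atTop
      (𝓝 (ContinuousLinearMap.adjoint T₀ (lp.single 2 k 1))) := by
    intro k
    refine tendsto_sub_nhds_zero_iff.mp (col_tendsto a a₀ C hbound hbound₀ hmeas hmeas₀ hconv
      (fun j => (k:ℤ) - (j:ℤ)) (fun p q h => by simp only at h; omega)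
      (fun n => ContinuousLinearMap.adjoint (T n) (lp.single 2 k 1)
        - ContinuousLinearMap.adjoint T₀ (lp.single 2 k 1)) ?_)
    intro n j
    rw [lp.coeFn_sub, Pi.sub_apply, hadj_entry (T n) j k, hadj_entry T₀ j k,
      hT n k j, hT₀ k j, ← map_sub, ← hfsub n]
    exact RCLike.norm_conj _
  have hHadjcol : ∀ k : ℕ, Tendsto
      (fun n => ContinuousLinearMap.adjoint (Hk n) (lp.single 2 k 1)) atTop
      (𝓝 (ContinuousLinearMap.adjoint H₀ (lp.single 2 k 1))) := by
    intro k
    refine tendsto_sub_nhds_zero_iff.mp (col_tendsto a a₀ C hbound hbound₀ hmeas hmeas₀ hconv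
      (fun j => (k:ℤ) + (j:ℤ) + 1) (fun p q h => by simp only at h; omega)
      (fun n => ContinuousLinearMap.adjoint (Hk n) (lp.single 2 k 1)
        - ContinuousLinearMap.adjoint H₀ (lp.single 2 k 1)) ?_)
    intro n j
    rw [lp.coeFn_sub, Pi.sub_apply, hadj_entry (Hk n) j k, hadj_entry H₀ j k,
      hH n k j, hH₀ k j, ← map_sub, ← hfsub n]
    exact RCLike.norm_conj _
  refine ⟨strong_conv T T₀ C hTn hT0 hTcol, strong_conv Hk H₀ C hHn hH0 hHcol,
    strong_conv (fun n => ContinuousLinearMap.adjoint (T n)) (ContinuousLinearMap.adjoint T₀) C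
      (fun n => by rw [hadj_norm]; exact hTn n) (by rw [hadj_norm]; exact hT0) hTadjcol,
    strong_conv (fun n => ContinuousLinearMap.adjoint (Hk n)) (ContinuousLinearMap.adjoint H₀) C
      (fun n => by rw [hadj_norm]; exact hHn n) (by rw [hadj_norm]; exact hH0) hHadjcol⟩

end
end
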